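/- arXiv:2012.08324 — 4 statements merged into one kernel-verified Lean document; each statement's English description precedes it below -/
import Mathlib

section
/- Let C be a 2-copula that is stochastically increasing in the first component (u ↦ C(u,v) concave for each v). Then for every 2-copula D and all u,v ∈ [0,1], the Markov product satisfies (D * C)(u,v) ≤ C(u,v), where (D * C)(u,v) = ∫₀¹ ∂₂D(u,t) · ∂₁C(t,v) dt. -/
open MeasureTheory Set Filter

def IsCopula (C : ℝ → ℝ → ℝ) : Prop :=
  (∀ u ∈ Icc (0:ℝ) 1, C u 0 = 0 ∧ C u 1 = u) ∧
  (∀ v ∈ Icc (0:ℝ) 1, C 0 v = 0 ∧ C 1 v = v) ∧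
  (∀ u₁ u₂ v₁ v₂ : ℝ, u₁ ∈ Icc (0:ℝ) 1 → u₂ ∈ Icc (0:ℝ) 1 →
    v₁ ∈ Icc (0:ℝ) 1 → v₂ ∈ Icc (0:ℝ) 1 → u₁ ≤ u₂ → v₁ ≤ v₂ →
    0 ≤ C u₂ v₂ - C u₂ v₁ - C u₁ v₂ + C u₁ v₁)

/-- Markov product of two copulas: (C₁ * C₂)(u,v) = ∫₀¹ ∂₂C₁(u,t) ∂₁C₂(t,v) dt. -/
noncomputable def MarkovProduct (C₁ C₂ : ℝ → ℝ → ℝ) (u v : ℝ) : ℝ :=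
  ∫ t in (0:ℝ)..1, deriv (fun s => C₁ u s) t * deriv (fun s => C₂ s v) t

/-- Stochastically increasing in the first component: u ↦ C(u,v) is concave for each v. -/
def StochIncr (C : ℝ → ℝ → ℝ) : Prop :=
  ∀ v ∈ Icc (0:ℝ) 1, ConcaveOn ℝ (Icc (0:ℝ) 1) (fun u => C u v)

/-- Stochastically decreasing in the first component: u ↦ C(u,v) is convex for each v. -/
def StochDecr (C : ℝ → ℝ → ℝ) : Prop :=
  ∀ v ∈ Icc (0:ℝ) 1, ConvexOn ℝ (Icc (0:ℝ) 1) (fun u => C u v)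

open Topology

section Helpers

lemma myIntegral_deriv_le {f : ℝ → ℝ} (hf : Monotone f) (hc : Continuous f)
    {a b : ℝ} (hab : a ≤ b) : ∫ t in a..b, deriv f t ≤ f b - f a := by
  have heq : ∀ x, hf.stieltjesFunction x = f x := by
    intro x
    rw [hf.stieltjesFunction_eq]
    exact rightLim_eq_of_tendsto
      ((hc.tendsto x).mono_left nhdsWithin_le_nhds)
  set μ := hf.stieltjesFunction.measure with hμdef
  have hμ : μ (Set.Ioc a b) = ENNReal.ofReal (f b - f a) := by
    rw [hμdef, StieltjesFunction.measure_Ioc, heq, heq]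
  have hae : ∀ᵐ x, deriv f x = (μ.rnDeriv volume x).toReal := by
    filter_upwards [hf.ae_hasDerivAt] with x hx using hx.deriv
  rw [intervalIntegral.integral_of_le hab]
  calc (∫ x in Set.Ioc a b, deriv f x)
      = ∫ x in Set.Ioc a b, (μ.rnDeriv volume x).toReal :=
        integral_congr_ae (ae_restrict_of_ae hae)
    _ ≤ (μ (Set.Ioc a b)).toReal :=
        Measure.setIntegral_toReal_rnDeriv_le (by rw [hμ]; exact ENNReal.ofReal_ne_top)
    _ = f b - f a := by rw [hμ, ENNReal.toReal_ofReal (sub_nonneg.2 (hf hab))]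

lemma myDeriv_mem {ψ : ℝ → ℝ} (hm : Monotone ψ)
    (hl : ∀ s t : ℝ, s ≤ t → ψ t - ψ s ≤ t - s) (t : ℝ) :
    deriv ψ t ∈ Set.Icc (0:ℝ) 1 := by
  by_cases h : DifferentiableAt ℝ ψ t
  · have hder := h.hasDerivAt
    rw [hasDerivAt_iff_tendsto_slope] at hder
    have hmem : ∀ y : ℝ, y ≠ t → slope ψ t y ∈ Set.Icc (0:ℝ) 1 := by
      intro y hy
      rw [slope_def_field]
      rcases lt_or_gt_of_ne hy with hlt | hgt
      · have h1 : ψ y ≤ ψ t := hm hlt.le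
        have h2 : ψ t - ψ y ≤ t - y := hl _ _ hlt.le
        constructor
        · rw [div_nonneg_iff]
          right; exact ⟨by linarith, by linarith⟩
        · rw [div_le_one_iff]
          right; right; exact ⟨by linarith, by linarith⟩
      · have h1 : ψ t ≤ ψ y := hm hgt.le
        have h2 : ψ y - ψ t ≤ y - t := hl _ _ hgt.le
        constructor
        · exact div_nonneg (by linarith) (by linarith)
        · rw [div_le_one (by linarith)]; linarith
    have hev : ∀ᶠ y in 𝓝[≠] t, slope ψ t y ∈ Set.Icc (0:ℝ) 1 := by
      filter_upwards [self_mem_nhdsWithin] with y hy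
      exact hmem y hy
    constructor
    · exact ge_of_tendsto hder (hev.mono fun y hy => hy.1)
    · exact le_of_tendsto hder (hev.mono fun y hy => hy.2)
  · rw [deriv_zero_of_not_differentiableAt h]
    exact ⟨le_refl 0, zero_le_one⟩

lemma cont_of_mono_lip {ψ : ℝ → ℝ} (hm : Monotone ψ)
    (hl : ∀ s t : ℝ, s ≤ t → ψ t - ψ s ≤ t - s) : Continuous ψ := by
  have : LipschitzWith 1 ψ := by
    apply LipschitzWith.of_dist_le_mul
    intro x y
    rcases le_total x y with h | h
    · have h1 := hm h
      have h2 := hl x y h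
      rw [Real.dist_eq, Real.dist_eq, abs_of_nonpos (by linarith), abs_of_nonpos (by linarith)]
      push_cast
      linarith
    · have h1 := hm h
      have h2 := hl y x h
      rw [Real.dist_eq, Real.dist_eq, abs_of_nonneg (by linarith), abs_of_nonneg (by linarith)]
      push_cast
      linarith
  exact this.continuous

noncomputable def myClamp (t : ℝ) : ℝ := max 0 (min 1 t)

lemma myClamp_mem (t : ℝ) : myClamp t ∈ Icc (0:ℝ) 1 :=
  ⟨le_max_left _ _, max_le zero_le_one (min_le_left _ _)⟩

lemma myClamp_eq {t : ℝ} (ht : t ∈ Icc (0:ℝ) 1) : myClamp t = t := by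
  unfold myClamp; rw [min_eq_right ht.2, max_eq_right ht.1]

lemma myClamp_mono : Monotone myClamp := by
  intro s t hst; unfold myClamp
  simp only [max_def, min_def]; split_ifs <;> linarith

lemma myClamp_lip : ∀ s t : ℝ, s ≤ t → myClamp t - myClamp s ≤ t - s := by
  intro s t hst; unfold myClamp
  simp only [max_def, min_def]; split_ifs <;> linarith

lemma ae_ne_c (c : ℝ) : ∀ᵐ t : ℝ, t ≠ c := by
  refine ae_iff.2 ?_
  simp only [ne_eq, not_not, setOf_eq_eq_singleton]
  exact Real.volume_singleton

section SecProps

variable {φ : ℝ → ℝ}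
  (h : ∀ s t : ℝ, s ∈ Icc (0:ℝ) 1 → t ∈ Icc (0:ℝ) 1 → s ≤ t → φ s ≤ φ t ∧ φ t - φ s ≤ t - s)

include h in
lemma psi_mono : Monotone (fun t => φ (myClamp t)) := fun s t hst =>
  (h _ _ (myClamp_mem s) (myClamp_mem t) (myClamp_mono hst)).1

include h in
lemma psi_lip : ∀ s t : ℝ, s ≤ t → φ (myClamp t) - φ (myClamp s) ≤ t - s := fun s t hst =>
  le_trans (h _ _ (myClamp_mem s) (myClamp_mem t) (myClamp_mono hst)).2 (myClamp_lip s t hst)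

lemma deriv_sec_eq (t : ℝ) (ht : t ∈ Ioo (0:ℝ) 1) :
    deriv φ t = deriv (fun s => φ (myClamp s)) t := by
  apply Filter.EventuallyEq.deriv_eq
  filter_upwards [Ioo_mem_nhds ht.1 ht.2] with y hy
  rw [myClamp_eq (Ioo_subset_Icc_self hy)]

include h in
lemma deriv_sec_mem (t : ℝ) (ht : t ∈ Ioo (0:ℝ) 1) : deriv φ t ∈ Icc (0:ℝ) 1 := by
  rw [deriv_sec_eq t ht]
  exact myDeriv_mem (psi_mono h) (psi_lip h) t

include h in
lemma ae_diff_sec : ∀ᵐ t : ℝ, t ∈ Ioo (0:ℝ) 1 → DifferentiableAt ℝ φ t := by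
  filter_upwards [(psi_mono h).ae_differentiableAt] with t hdiff ht
  have hev : (fun s => φ (myClamp s)) =ᶠ[𝓝 t] φ := by
    filter_upwards [Ioo_mem_nhds ht.1 ht.2] with y hy
    rw [myClamp_eq (Ioo_subset_Icc_self hy)]
  exact hev.differentiableAt_iff.mp hdiff

include h in
lemma integral_deriv_sec_le {a b : ℝ} (ha : 0 ≤ a) (hab : a ≤ b) (hb : b ≤ 1) :
    ∫ t in a..b, deriv φ t ≤ φ b - φ a := by
  have hcont : Continuous (fun t => φ (myClamp t)) := cont_of_mono_lip (psi_mono h) (psi_lip h)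
  have hcongr : (∫ t in a..b, deriv φ t) = ∫ t in a..b, deriv (fun s => φ (myClamp s)) t := by
    apply intervalIntegral.integral_congr_ae
    filter_upwards [ae_ne_c 1] with x hx hmem
    rw [uIoc_of_le hab] at hmem
    have hx1 : x ∈ Ioo (0:ℝ) 1 := ⟨lt_of_le_of_lt ha hmem.1, lt_of_le_of_ne (le_trans hmem.2 hb) hx⟩
    exact deriv_sec_eq x hx1
  rw [hcongr]
  have := myIntegral_deriv_le (psi_mono h) hcont hab
  rwa [myClamp_eq ⟨ha, le_trans hab hb⟩, myClamp_eq ⟨le_trans ha hab, hb⟩] at this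

end SecProps

lemma myIntervalIntegrable {h : ℝ → ℝ} (hm : Measurable h)
    (hb : ∀ t ∈ Ioo (0:ℝ) 1, |h t| ≤ 1) {a b : ℝ} (ha : 0 ≤ a) (hab : a ≤ b) (hb1 : b ≤ 1) :
    IntervalIntegrable h volume a b := by
  rw [intervalIntegrable_iff]
  apply Measure.integrableOn_of_bounded (M := 1) measure_Ioc_lt_top.ne hm.aestronglyMeasurable
  filter_upwards [ae_restrict_mem measurableSet_uIoc, ae_restrict_of_ae (ae_ne_c 1)] with t ht h1
  rw [inf_of_le_left hab, sup_of_le_right hab] at ht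
  have : t ∈ Ioo (0:ℝ) 1 := ⟨lt_of_le_of_lt ha ht.1, lt_of_le_of_ne (le_trans ht.2 hb1) h1⟩
  rw [Real.norm_eq_abs]
  exact hb t this

lemma cop_sec2 {D : ℝ → ℝ → ℝ} (hD : IsCopula D) {u : ℝ} (hu : u ∈ Icc (0:ℝ) 1) :
    ∀ s t : ℝ, s ∈ Icc (0:ℝ) 1 → t ∈ Icc (0:ℝ) 1 → s ≤ t →
      D u s ≤ D u t ∧ D u t - D u s ≤ t - s := by
  intro s t hs ht hst
  obtain ⟨hB1, hB2, hinc⟩ := hD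
  have h01 : (0:ℝ) ∈ Icc (0:ℝ) 1 := ⟨le_refl 0, zero_le_one⟩
  have h11 : (1:ℝ) ∈ Icc (0:ℝ) 1 := ⟨zero_le_one, le_refl 1⟩
  have h1 := hinc 0 u s t h01 hu hs ht hu.1 hst
  have h2 := hinc u 1 s t hu h11 hs ht hu.2 hst
  have e1 := (hB2 s hs).1
  have e2 := (hB2 t ht).1
  have e3 := (hB2 s hs).2
  have e4 := (hB2 t ht).2
  constructor <;> linarith

lemma cop_sec1 {C : ℝ → ℝ → ℝ} (hC : IsCopula C) {v : ℝ} (hv : v ∈ Icc (0:ℝ) 1) :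
    ∀ s t : ℝ, s ∈ Icc (0:ℝ) 1 → t ∈ Icc (0:ℝ) 1 → s ≤ t →
      C s v ≤ C t v ∧ C t v - C s v ≤ t - s := by
  intro s t hs ht hst
  obtain ⟨hB1, hB2, hinc⟩ := hC
  have h01 : (0:ℝ) ∈ Icc (0:ℝ) 1 := ⟨le_refl 0, zero_le_one⟩
  have h11 : (1:ℝ) ∈ Icc (0:ℝ) 1 := ⟨zero_le_one, le_refl 1⟩
  have h1 := hinc s t 0 v hs ht h01 hv hst hv.1
  have h2 := hinc s t v 1 hs ht hv h11 hst hv.2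
  have e1 := (hB1 s hs).1
  have e2 := (hB1 t ht).1
  have e3 := (hB1 s hs).2
  have e4 := (hB1 t ht).2
  constructor <;> linarith

end Helpers

theorem markovProduct_le_of_stochIncr (C : ℝ → ℝ → ℝ) (hC : IsCopula C) (hSI : StochIncr C) :
    ∀ D : ℝ → ℝ → ℝ, IsCopula D →
      ∀ u ∈ Icc (0:ℝ) 1, ∀ v ∈ Icc (0:ℝ) 1, MarkovProduct D C u v ≤ C u v := by
  intro D hD u hu v hv
  have hu1 : u ≤ 1 := hu.2
  set f : ℝ → ℝ := fun t => deriv (fun s => D u s) t with hfdef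
  set g : ℝ → ℝ := fun t => deriv (fun s => C s v) t with hgdef
  have hsecD := cop_sec2 hD hu
  have hsecC := cop_sec1 hC hv
  have hDu0 : D u 0 = 0 := (hD.1 u hu).1
  have hDu1 : D u 1 = u := (hD.1 u hu).2
  have hC0v : C 0 v = 0 := (hC.2.1 v hv).1
  have hf_mem : ∀ t ∈ Ioo (0:ℝ) 1, f t ∈ Icc (0:ℝ) 1 := fun t ht => deriv_sec_mem hsecD t ht
  have hg_mem : ∀ t ∈ Ioo (0:ℝ) 1, g t ∈ Icc (0:ℝ) 1 := fun t ht => deriv_sec_mem hsecC t ht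
  have hfm : Measurable f := measurable_deriv _
  have hgm : Measurable g := measurable_deriv _
  have hfb : ∀ t ∈ Ioo (0:ℝ) 1, |f t| ≤ 1 := fun t ht =>
    abs_le.2 ⟨by linarith [(hf_mem t ht).1], (hf_mem t ht).2⟩
  have hfgb : ∀ t ∈ Ioo (0:ℝ) 1, |f t * g t| ≤ 1 := by
    intro t ht
    have h1 := hf_mem t ht
    have h2 := hg_mem t ht
    rw [abs_mul, abs_of_nonneg h1.1, abs_of_nonneg h2.1]
    nlinarith [h1.1, h1.2, h2.1, h2.2]
  have hgfb : ∀ t ∈ Ioo (0:ℝ) 1, |g t * (1 - f t)| ≤ 1 := by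
    intro t ht
    have h1 := hf_mem t ht
    have h2 := hg_mem t ht
    rw [abs_mul, abs_of_nonneg h2.1, abs_of_nonneg (by linarith [h1.2])]
    nlinarith [h1.1, h1.2, h2.1, h2.2]
  have intF01 : IntervalIntegrable f volume 0 1 :=
    myIntervalIntegrable hfm hfb le_rfl zero_le_one le_rfl
  have intF0u : IntervalIntegrable f volume 0 u :=
    myIntervalIntegrable hfm hfb le_rfl hu.1 hu1
  have intFu1 : IntervalIntegrable f volume u 1 :=
    myIntervalIntegrable hfm hfb hu.1 hu1 le_rfl
  have intFG01 : IntervalIntegrable (fun t => f t * g t) volume 0 1 :=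
    myIntervalIntegrable (hfm.mul hgm) hfgb le_rfl zero_le_one le_rfl
  have intFG0u : IntervalIntegrable (fun t => f t * g t) volume 0 u :=
    myIntervalIntegrable (hfm.mul hgm) hfgb le_rfl hu.1 hu1
  have intFGu1 : IntervalIntegrable (fun t => f t * g t) volume u 1 :=
    myIntervalIntegrable (hfm.mul hgm) hfgb hu.1 hu1 le_rfl
  have intGF0u : IntervalIntegrable (fun t => g t * (1 - f t)) volume 0 u :=
    myIntervalIntegrable (hgm.mul (measurable_const.sub hfm)) hgfb le_rfl hu.1 hu1
  have hIf01 : (∫ t in (0:ℝ)..1, f t) ≤ u := by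
    have := integral_deriv_sec_le hsecD le_rfl zero_le_one le_rfl
    rwa [hDu1, hDu0, sub_zero] at this
  have hMP : MarkovProduct D C u v = ∫ t in (0:ℝ)..1, f t * g t := rfl
  rcases eq_or_lt_of_le hu.1 with h0u | h0u
  · -- u = 0
    have hle : (∫ t in (0:ℝ)..1, f t * g t) ≤ ∫ t in (0:ℝ)..1, f t := by
      apply intervalIntegral.integral_mono_ae_restrict zero_le_one intFG01 intF01
      rw [Filter.EventuallyLE, ae_restrict_iff' measurableSet_Icc]
      filter_upwards [ae_ne_c 1, ae_ne_c 0] with t ht1 ht0 htmem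
      have ht01 : t ∈ Ioo (0:ℝ) 1 :=
        ⟨lt_of_le_of_ne htmem.1 (Ne.symm ht0), lt_of_le_of_ne htmem.2 ht1⟩
      have h1 := hf_mem t ht01
      have h2 := hg_mem t ht01
      nlinarith [h1.1, h1.2, h2.1, h2.2]
    have hCuv : C u v = 0 := by rw [← h0u]; exact hC0v
    have hf0 : (∫ t in (0:ℝ)..1, f t) ≤ 0 := by rw [← h0u] at hIf01; exact hIf01
    rw [hMP, hCuv]
    linarith
  · -- 0 < u
    have hadiff : ∀ᵐ t : ℝ, t ∈ Ioo (0:ℝ) 1 → DifferentiableAt ℝ (fun s => C s v) t :=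
      ae_diff_sec hsecC
    set S₀ : Set ℝ := {t : ℝ | t ∈ Ioo 0 u ∧ DifferentiableAt ℝ (fun s => C s v) t} with hS₀def
    have hS₀sub : ∀ t ∈ S₀, t ∈ Ioo (0:ℝ) 1 := fun t ht =>
      ⟨ht.1.1, lt_of_lt_of_le ht.1.2 hu1⟩
    have hS0ne : S₀.Nonempty := by
      by_contra hemp
      rw [Set.not_nonempty_iff_eq_empty] at hemp
      have hsub : Ioo (0:ℝ) u ⊆
          {t : ℝ | ¬ (t ∈ Ioo (0:ℝ) 1 → DifferentiableAt ℝ (fun s => C s v) t)} := by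
        intro t ht
        simp only [mem_setOf_eq]
        intro himp
        have ht1 : t ∈ Ioo (0:ℝ) 1 := ⟨ht.1, lt_of_lt_of_le ht.2 hu1⟩
        have : t ∈ S₀ := ⟨ht, himp ht1⟩
        rw [hemp] at this
        exact this
      have h0 : volume {t : ℝ | ¬ (t ∈ Ioo (0:ℝ) 1 → DifferentiableAt ℝ (fun s => C s v) t)} = 0 :=
        ae_iff.mp hadiff
      have h1 : volume (Ioo (0:ℝ) u) ≤
          volume {t : ℝ | ¬ (t ∈ Ioo (0:ℝ) 1 → DifferentiableAt ℝ (fun s => C s v) t)} :=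
        measure_mono hsub
      rw [h0, Real.volume_Ioo] at h1
      have h2 : ENNReal.ofReal (u - 0) = 0 := le_antisymm h1 zero_le
      rw [ENNReal.ofReal_eq_zero] at h2
      linarith
    set c : ℝ := sInf (g '' S₀) with hcdef
    have hbdd : BddBelow (g '' S₀) := by
      refine ⟨0, ?_⟩
      rintro x ⟨t, ht, rfl⟩
      exact (hg_mem t (hS₀sub t ht)).1
    have hc0 : 0 ≤ c := by
      apply le_csInf (hS0ne.image g)
      rintro x ⟨t, ht, rfl⟩
      exact (hg_mem t (hS₀sub t ht)).1
    have hcle : ∀ t ∈ S₀, c ≤ g t := fun t ht => csInf_le hbdd ⟨t, ht, rfl⟩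
    have hconc : ConcaveOn ℝ (Icc (0:ℝ) 1) (fun x => C x v) := hSI v hv
    have hgec : ∀ t : ℝ, t ∈ Ioo u 1 → DifferentiableAt ℝ (fun s => C s v) t → g t ≤ c := by
      intro t ht hdt
      apply le_csInf (hS0ne.image g)
      rintro x ⟨s, hs, rfl⟩
      have hst : s < t := lt_trans hs.1.2 ht.1
      have hsI : s ∈ Icc (0:ℝ) 1 := ⟨hs.1.1.le, (lt_of_lt_of_le hs.1.2 hu1).le⟩
      have htI : t ∈ Icc (0:ℝ) 1 := ⟨(lt_trans h0u ht.1).le, ht.2.le⟩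
      calc g t ≤ slope (fun x => C x v) s t := hconc.deriv_le_slope hsI htI hst hdt
        _ ≤ g s := hconc.slope_le_deriv hsI htI hst hs.2
    -- integral chain
    have hsplit : (∫ t in (0:ℝ)..u, f t * g t) + (∫ t in u..(1:ℝ), f t * g t)
        = ∫ t in (0:ℝ)..1, f t * g t :=
      intervalIntegral.integral_add_adjacent_intervals intFG0u intFGu1
    have hsum : (∫ t in (0:ℝ)..u, f t) + (∫ t in u..(1:ℝ), f t) = ∫ t in (0:ℝ)..1, f t :=
      intervalIntegral.integral_add_adjacent_intervals intF0u intFu1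
    have h2 : (∫ t in u..(1:ℝ), f t * g t) ≤ ∫ t in u..(1:ℝ), c * f t := by
      apply intervalIntegral.integral_mono_ae_restrict hu1 intFGu1 (intFu1.const_mul c)
      rw [Filter.EventuallyLE, ae_restrict_iff' measurableSet_Icc]
      filter_upwards [ae_ne_c 1, ae_ne_c u, hadiff] with t ht1 htu hdiffimp htmem
      have htIoo : t ∈ Ioo u 1 := ⟨lt_of_le_of_ne htmem.1 (Ne.symm htu), lt_of_le_of_ne htmem.2 ht1⟩
      have ht01 : t ∈ Ioo (0:ℝ) 1 := ⟨lt_trans h0u htIoo.1, htIoo.2⟩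
      have hgc := hgec t htIoo (hdiffimp ht01)
      have hf0 := (hf_mem t ht01).1
      calc f t * g t ≤ f t * c := mul_le_mul_of_nonneg_left hgc hf0
        _ = c * f t := mul_comm _ _
    have h3 : (∫ t in u..(1:ℝ), c * f t) = c * ∫ t in u..(1:ℝ), f t :=
      intervalIntegral.integral_const_mul c f
    have h4 : (∫ t in u..(1:ℝ), f t) ≤ u - ∫ t in (0:ℝ)..u, f t := by linarith
    have h5 : c * (∫ t in u..(1:ℝ), f t) ≤ c * (u - ∫ t in (0:ℝ)..u, f t) :=
      mul_le_mul_of_nonneg_left h4 hc0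
    have h6 : (∫ t in (0:ℝ)..u, c * (1 - f t)) = c * (u - ∫ t in (0:ℝ)..u, f t) := by
      rw [intervalIntegral.integral_const_mul]
      congr 1
      rw [intervalIntegral.integral_sub intervalIntegrable_const intF0u]
      simp
    have h7 : (∫ t in (0:ℝ)..u, c * (1 - f t)) ≤ ∫ t in (0:ℝ)..u, g t * (1 - f t) := by
      apply intervalIntegral.integral_mono_ae_restrict hu.1
        ((intervalIntegrable_const.sub intF0u).const_mul c) intGF0u
      rw [Filter.EventuallyLE, ae_restrict_iff' measurableSet_Icc]
      filter_upwards [ae_ne_c u, ae_ne_c 0, hadiff] with t htu ht0 hdiffimp htmem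
      have htIoo : t ∈ Ioo (0:ℝ) u :=
        ⟨lt_of_le_of_ne htmem.1 (Ne.symm ht0), lt_of_le_of_ne htmem.2 htu⟩
      have ht01 : t ∈ Ioo (0:ℝ) 1 := ⟨htIoo.1, lt_of_lt_of_le htIoo.2 hu1⟩
      have hcg : c ≤ g t := hcle t ⟨htIoo, hdiffimp ht01⟩
      have hf1 := (hf_mem t ht01).2
      exact mul_le_mul_of_nonneg_right hcg (by linarith)
    have h8 : (∫ t in (0:ℝ)..u, f t * g t) + (∫ t in (0:ℝ)..u, g t * (1 - f t))
        = ∫ t in (0:ℝ)..u, g t := by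
      rw [← intervalIntegral.integral_add intFG0u intGF0u]
      apply intervalIntegral.integral_congr
      intro t _
      ring
    have h9 : (∫ t in (0:ℝ)..u, g t) ≤ C u v := by
      have := integral_deriv_sec_le hsecC le_rfl hu.1 hu1
      rwa [hC0v, sub_zero] at this
    rw [hMP]
    linarith
end

section
/- If a 2-copula C satisfies (D * C)(u,v) ≤ C(u,v) for every 2-copula D and all u,v ∈ [0,1], then C is stochastically increasing in the first component, i.e. u ↦ C(u,v) is concave for each v ∈ [0,1]. -/
open MeasureTheory Set Filter

open Topology

/-! ### Auxiliary material -/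

/-- The ordinal sum copula placing `W` on the square `[a,b]²` and `M` elsewhere. -/
noncomputable def Dab (a b u t : ℝ) : ℝ := min (min u t) (max a (u + t - b))

set_option maxHeartbeats 8000000 in
private lemma isCopula_Dab {a b : ℝ} (h0 : 0 ≤ a) (hab : a ≤ b) (hb1 : b ≤ 1) :
    IsCopula (Dab a b) := by
  refine ⟨fun u hu => ?_, fun w hw => ?_, fun u₁ u₂ v₁ v₂ hu₁ hu₂ hv₁ hv₂ h12 h34 => ?_⟩
  · obtain ⟨h1, h2⟩ := hu
    constructor <;> simp only [Dab, min_def, max_def] <;> split_ifs <;> linarith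
  · obtain ⟨h1, h2⟩ := hw
    constructor <;> simp only [Dab, min_def, max_def] <;> split_ifs <;> linarith
  · obtain ⟨ha1, ha2⟩ := hu₁
    obtain ⟨hb1', hb2⟩ := hu₂
    obtain ⟨hc1, hc2⟩ := hv₁
    obtain ⟨hd1, hd2⟩ := hv₂
    simp only [Dab, min_def, max_def]
    split_ifs <;> linarith

private lemma deriv_nonneg_of_monotone' {f : ℝ → ℝ} (hm : Monotone f) {x d : ℝ}
    (hd : HasDerivAt f d x) : 0 ≤ d := by
  have h : Tendsto (slope f x) (𝓝[>] x) (𝓝 d) :=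
    (hasDerivAt_iff_tendsto_slope.mp hd).mono_left
      (nhdsWithin_mono _ (fun y hy => ne_of_gt hy))
  refine ge_of_tendsto h ?_
  filter_upwards [self_mem_nhdsWithin] with y hy
  rw [slope_def_field]
  have hxy : x < y := hy
  exact div_nonneg (by linarith [hm (le_of_lt hxy)]) (by linarith)

private lemma continuous_of_mono_lip {G : ℝ → ℝ} (hm : Monotone G)
    (hlip : ∀ x y : ℝ, x ≤ y → G y - G x ≤ y - x) : Continuous G := by
  have : LipschitzWith 1 G := by
    refine LipschitzWith.of_dist_le_mul fun x y => ?_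
    rw [Real.dist_eq, Real.dist_eq, NNReal.coe_one, one_mul, abs_le]
    rcases le_total x y with hxy | hxy
    · have h1 := hlip x y hxy
      have h2 := hm hxy
      constructor <;> cases abs_cases (x - y) <;> linarith
    · have h1 := hlip y x hxy
      have h2 := hm hxy
      constructor <;> cases abs_cases (x - y) <;> linarith
  exact this.continuous

private lemma integral_deriv_le_of_monotone {G : ℝ → ℝ} (hm : Monotone G) (hc : Continuous G)
    {p q : ℝ} (hpq : p ≤ q) : ∫ t in p..q, deriv G t ≤ G q - G p := by
  set S : StieltjesFunction ℝ :=
    ⟨G, hm, fun x => (hc.tendsto x).mono_left nhdsWithin_le_nhds⟩ with hS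
  have hae : ∀ᵐ t : ℝ, deriv G t = (S.measure.rnDeriv volume t).toReal := by
    filter_upwards [S.ae_hasDerivAt] with t ht
    exact ht.deriv
  rw [intervalIntegral.integral_of_le hpq]
  calc ∫ t in Ioc p q, deriv G t
      = ∫ t in Ioc p q, (S.measure.rnDeriv volume t).toReal := by
        refine setIntegral_congr_ae measurableSet_Ioc ?_
        filter_upwards [hae] with t ht _; exact ht
    _ ≤ (S.measure (Ioc p q)).toReal := by
        refine Measure.setIntegral_toReal_rnDeriv_le ?_
        rw [S.measure_Ioc]; exact ENNReal.ofReal_ne_top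
    _ = G q - G p := by
        rw [S.measure_Ioc, ENNReal.toReal_ofReal (by linarith [hm hpq])]

private lemma deriv_mem_Icc_of_mono_lip {G : ℝ → ℝ} (hm : Monotone G)
    (hlip : ∀ x y : ℝ, x ≤ y → G y - G x ≤ y - x) (t : ℝ) : deriv G t ∈ Icc (0:ℝ) 1 := by
  have hmF : Monotone (fun x => x - G x) := by
    intro x y hxy
    have := hlip x y hxy
    simp only; linarith
  by_cases hdiff : DifferentiableAt ℝ G t
  · constructor
    · exact deriv_nonneg_of_monotone' hm hdiff.hasDerivAt
    · have hF : HasDerivAt (fun x => x - G x) (1 - deriv G t) t :=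
        (hasDerivAt_id t).sub hdiff.hasDerivAt
      have := deriv_nonneg_of_monotone' hmF hF
      linarith
  · rw [deriv_zero_of_not_differentiableAt hdiff]
    exact ⟨le_refl 0, zero_le_one⟩

private lemma intervalIntegrable_deriv_of_mono_lip {G : ℝ → ℝ} (hm : Monotone G)
    (hlip : ∀ x y : ℝ, x ≤ y → G y - G x ≤ y - x) (p q : ℝ) :
    IntervalIntegrable (deriv G) volume p q := by
  refine (intervalIntegrable_const (c := (1:ℝ))).mono_fun
    (measurable_deriv G).aestronglyMeasurable.restrict ?_
  refine Filter.Eventually.of_forall fun t => ?_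
  have := deriv_mem_Icc_of_mono_lip hm hlip t
  simp only [Real.norm_eq_abs, abs_one]
  rw [abs_le]
  constructor <;> linarith [this.1, this.2]

private lemma integral_deriv_eq_of_mono_lip {G : ℝ → ℝ} (hm : Monotone G)
    (hlip : ∀ x y : ℝ, x ≤ y → G y - G x ≤ y - x) {p q : ℝ} (hpq : p ≤ q) :
    ∫ t in p..q, deriv G t = G q - G p := by
  have hcont : Continuous G := continuous_of_mono_lip hm hlip
  have hle := integral_deriv_le_of_monotone hm hcont hpq
  set F : ℝ → ℝ := fun x => x - G x with hF
  have hmF : Monotone F := by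
    intro x y hxy; have := hlip x y hxy; simp only [hF]; linarith
  have hcF : Continuous F := continuous_id.sub hcont
  have hFle := integral_deriv_le_of_monotone hmF hcF hpq
  have hae : ∀ᵐ t : ℝ, deriv F t = 1 - deriv G t := by
    filter_upwards [hm.ae_differentiableAt] with t ht
    exact ((hasDerivAt_id t).sub ht.hasDerivAt).deriv
  have hint := intervalIntegrable_deriv_of_mono_lip hm hlip p q
  have h1 : ∫ t in p..q, deriv F t = ∫ t in p..q, (1 - deriv G t) := by
    refine intervalIntegral.integral_congr_ae ?_
    filter_upwards [hae] with t ht _; exact ht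
  rw [h1, intervalIntegral.integral_sub intervalIntegrable_const hint] at hFle
  simp only [intervalIntegral.integral_const, smul_eq_mul, mul_one, hF] at hFle
  linarith

theorem stochIncr_of_markovProduct_le (C : ℝ → ℝ → ℝ) (hC : IsCopula C)
    (h : ∀ D : ℝ → ℝ → ℝ, IsCopula D →
      ∀ u ∈ Icc (0:ℝ) 1, ∀ v ∈ Icc (0:ℝ) 1, MarkovProduct D C u v ≤ C u v) :
    StochIncr C := by
  obtain ⟨hB1, hB2, hrect⟩ := hC
  intro v hv
  have hg0 : C 0 v = 0 := (hB2 v hv).1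
  have hmono : ∀ x y : ℝ, x ∈ Icc (0:ℝ) 1 → y ∈ Icc (0:ℝ) 1 → x ≤ y → C x v ≤ C y v := by
    intro x y hx hy hxy
    have h1 := hrect x y 0 v hx hy (by norm_num) hv hxy hv.1
    have e1 := (hB1 x hx).1
    have e2 := (hB1 y hy).1
    linarith
  have hlip : ∀ x y : ℝ, x ∈ Icc (0:ℝ) 1 → y ∈ Icc (0:ℝ) 1 → x ≤ y → C y v - C x v ≤ y - x := by
    intro x y hx hy hxy
    have h1 := hrect x y v 1 hx hy hv (by norm_num) hxy hv.2
    have e1 := (hB1 x hx).2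
    have e2 := (hB1 y hy).2
    linarith
  set G : ℝ → ℝ := fun x => C (max 0 (min 1 x)) v with hGdef
  have hclamp_mem : ∀ x : ℝ, max 0 (min 1 x) ∈ Icc (0:ℝ) 1 := fun x =>
    ⟨le_max_left _ _, max_le (by norm_num) (min_le_left _ _)⟩
  have hGg : ∀ x ∈ Icc (0:ℝ) 1, G x = C x v := by
    intro x hx
    simp only [hGdef]
    rw [min_eq_right hx.2, max_eq_right hx.1]
  have hclamp_mono : Monotone (fun x : ℝ => max 0 (min 1 x)) :=
    fun x y hxy => max_le_max le_rfl (min_le_min le_rfl hxy)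
  have hclamp_lip : ∀ x y : ℝ, x ≤ y → max 0 (min 1 y) - max 0 (min 1 x) ≤ y - x := by
    intro x y hxy
    simp only [max_def, min_def]
    split_ifs <;> linarith
  have hGmono : Monotone G := fun x y hxy =>
    hmono _ _ (hclamp_mem x) (hclamp_mem y) (hclamp_mono hxy)
  have hGlip : ∀ x y : ℝ, x ≤ y → G y - G x ≤ y - x := by
    intro x y hxy
    have h1 := hlip _ _ (hclamp_mem x) (hclamp_mem y) (hclamp_mono hxy)
    have h2 := hclamp_lip x y hxy
    simp only [hGdef]
    linarith
  have hGcont : Continuous G := continuous_of_mono_lip hGmono hGlip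
  -- the key inequality, obtained from the hypothesis applied to an ordinal-sum copula
  have key : ∀ a x c b : ℝ, 0 ≤ a → a ≤ x → x ≤ c → c ≤ b → b ≤ 1 → x + c = a + b →
      C a v + C b v ≤ C x v + C c v := by
    intro a x c b h0a hax hxc hcb hb1' hsum
    have hD : IsCopula (Dab a b) := isCopula_Dab h0a (by linarith) hb1'
    have hx01 : x ∈ Icc (0:ℝ) 1 := ⟨by linarith, by linarith⟩
    have hMP := h (Dab a b) hD x hx01 v hv
    have hstep1 : MarkovProduct (Dab a b) C x v
        = ∫ t in (0:ℝ)..1, ((Ioc 0 a ∪ Ioc c b).indicator (deriv G)) t := by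
      unfold MarkovProduct
      refine intervalIntegral.integral_congr_ae ?_
      have hnull : ∀ᵐ t : ℝ, t ∉ ({a, c, b, (1:ℝ)} : Set ℝ) := by
        refine measure_eq_zero_iff_ae_notMem.mp ?_
        exact Set.Finite.measure_zero (Set.toFinite _) _
      filter_upwards [hnull] with t htm htI
      rw [Set.uIoc_of_le (by norm_num : (0:ℝ) ≤ 1)] at htI
      simp only [Set.mem_insert_iff, Set.mem_singleton_iff, not_or] at htm
      obtain ⟨hta, htc, htb, ht1⟩ := htm
      have ht0 : 0 < t := htI.1
      have ht1' : t < 1 := lt_of_le_of_ne htI.2 ht1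
      have hderivC : deriv (fun s => C s v) t = deriv G t := by
        have hev : (fun s => C s v) =ᶠ[𝓝 t] G := by
          filter_upwards [Ioo_mem_nhds ht0 ht1'] with s hs
          exact (hGg s ⟨hs.1.le, hs.2.le⟩).symm
        exact hev.deriv_eq
      rcases lt_trichotomy t a with h1 | h1 | h1
      · have hwt : deriv (fun s => Dab a b x s) t = 1 := by
          have hev : (fun s => Dab a b x s) =ᶠ[𝓝 t] fun s => s := by
            filter_upwards [Ioo_mem_nhds ht0 h1] with s hs
            obtain ⟨hs0, hsa⟩ := hs
            simp only [Dab, min_def, max_def]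
            split_ifs <;> linarith
          rw [hev.deriv_eq]
          simp
        rw [Set.indicator_of_mem (Set.mem_union_left _ (show t ∈ Ioc (0:ℝ) a from ⟨ht0, h1.le⟩)), hwt, one_mul, hderivC]
      · exact (hta h1).elim
      · rcases lt_trichotomy t c with h2 | h2 | h2
        · have hwt : deriv (fun s => Dab a b x s) t = 0 := by
            have hev : (fun s => Dab a b x s) =ᶠ[𝓝 t] fun _ => a := by
              filter_upwards [Ioo_mem_nhds h1 h2] with s hs
              obtain ⟨hsa, hsc⟩ := hs
              simp only [Dab, min_def, max_def]
              split_ifs <;> linarith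
            rw [hev.deriv_eq]
            simp
          have hW : (Ioc 0 a ∪ Ioc c b).indicator (deriv G) t = 0 := by
            refine Set.indicator_of_notMem ?_ _
            simp only [Set.mem_union, Set.mem_Ioc, not_or, not_and_or]
            exact ⟨Or.inr (not_le.mpr h1), Or.inl (not_lt.mpr h2.le)⟩
          rw [hW, hwt, zero_mul]
        · exact (htc h2).elim
        · rcases lt_trichotomy t b with h3 | h3 | h3
          · have hwt : deriv (fun s => Dab a b x s) t = 1 := by
              have hev : (fun s => Dab a b x s) =ᶠ[𝓝 t] fun s => x + s - b := by
                filter_upwards [Ioo_mem_nhds h2 h3] with s hs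
                obtain ⟨hsc, hsb⟩ := hs
                simp only [Dab, min_def, max_def]
                split_ifs <;> linarith
              rw [hev.deriv_eq]
              have hDa : HasDerivAt (fun s : ℝ => x + s - b) 1 t :=
                ((hasDerivAt_id t).const_add x).sub_const b
              simpa using hDa.deriv
            rw [Set.indicator_of_mem (Set.mem_union_right _ (show t ∈ Ioc c b from ⟨h2, h3.le⟩)), hwt, one_mul, hderivC]
          · exact (htb h3).elim
          · have hwt : deriv (fun s => Dab a b x s) t = 0 := by
              have hev : (fun s => Dab a b x s) =ᶠ[𝓝 t] fun _ => x := by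
                filter_upwards [Ioo_mem_nhds h3 ht1'] with s hs
                obtain ⟨hsb, hs1⟩ := hs
                simp only [Dab, min_def, max_def]
                split_ifs <;> linarith
              rw [hev.deriv_eq]
              simp
            have hW : (Ioc 0 a ∪ Ioc c b).indicator (deriv G) t = 0 := by
              refine Set.indicator_of_notMem ?_ _
              simp only [Set.mem_union, Set.mem_Ioc, not_or, not_and_or]
              exact ⟨Or.inr (not_le.mpr (by linarith)), Or.inr (not_le.mpr h3)⟩
            rw [hW, hwt, zero_mul]
    have hIa : IntegrableOn (deriv G) (Ioc 0 a) volume :=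
      (intervalIntegrable_deriv_of_mono_lip hGmono hGlip 0 a).1
    have hIcb : IntegrableOn (deriv G) (Ioc c b) volume :=
      (intervalIntegrable_deriv_of_mono_lip hGmono hGlip c b).1
    have hdisj : Disjoint (Ioc (0:ℝ) a) (Ioc c b) := by
      rw [Set.Ioc_disjoint_Ioc]
      exact le_trans (min_le_left _ _) (le_trans (by linarith) (le_max_right _ _))
    have hsub : Ioc (0:ℝ) a ∪ Ioc c b ⊆ Ioc (0:ℝ) 1 := by
      intro t ht
      rcases ht with ht | ht
      · exact ⟨ht.1, le_trans ht.2 (by linarith)⟩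
      · exact ⟨lt_of_le_of_lt (by linarith : (0:ℝ) ≤ c) ht.1, le_trans ht.2 hb1'⟩
    have hstep2 : ∫ t in (0:ℝ)..1, ((Ioc 0 a ∪ Ioc c b).indicator (deriv G)) t
        = (G a - G 0) + (G b - G c) := by
      rw [intervalIntegral.integral_of_le (by norm_num : (0:ℝ) ≤ 1)]
      rw [setIntegral_indicator (measurableSet_Ioc.union measurableSet_Ioc)]
      rw [Set.inter_eq_self_of_subset_right hsub]
      rw [setIntegral_union hdisj measurableSet_Ioc hIa hIcb]
      rw [← intervalIntegral.integral_of_le h0a, ← intervalIntegral.integral_of_le hcb]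
      rw [integral_deriv_eq_of_mono_lip hGmono hGlip h0a,
        integral_deriv_eq_of_mono_lip hGmono hGlip hcb]
    have hGa : G a = C a v := hGg a ⟨h0a, by linarith⟩
    have hGb : G b = C b v := hGg b ⟨by linarith, hb1'⟩
    have hGc : G c = C c v := hGg c ⟨by linarith, by linarith⟩
    have hG0 : G 0 = C 0 v := hGg 0 ⟨le_refl 0, zero_le_one⟩
    rw [hstep1, hstep2, hGa, hGb, hGc, hG0, hg0] at hMP
    linarith
  -- midpoint concavity
  have hmid : ∀ z w : ℝ, z ∈ Icc (0:ℝ) 1 → w ∈ Icc (0:ℝ) 1 → z ≤ w →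
      C z v + C w v ≤ 2 * C ((z + w) / 2) v := by
    intro z w hz hw hzw
    have := key z ((z + w) / 2) ((z + w) / 2) w hz.1 (by linarith) (le_refl _)
      (by linarith) hw.2 (by ring)
    linarith
  -- from midpoint concavity and continuity to full concavity
  have main : ∀ p q α β : ℝ, p ∈ Icc (0:ℝ) 1 → q ∈ Icc (0:ℝ) 1 → p ≤ q → 0 ≤ α → 0 ≤ β →
      α + β = 1 → α * C p v + β * C q v ≤ C (α * p + β * q) v := by
    intro p q α β hp hq hpq hα hβ hαβ
    rcases eq_or_lt_of_le hpq with heq | hlt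
    · subst heq
      have e : α * p + β * p = p := by rw [← add_mul, hαβ, one_mul]
      rw [e]
      have e2 : α * C p v + β * C p v = C p v := by rw [← add_mul, hαβ, one_mul]
      linarith
    · set k : ℝ := (C q v - C p v) / (q - p) with hk
      set L : ℝ → ℝ := fun t => C p v + (t - p) * k with hL
      set u : ℝ → ℝ := fun t => C t v - L t with hu
      have hqp : (0:ℝ) < q - p := by linarith
      have hIccsub : Icc p q ⊆ Icc (0:ℝ) 1 := fun t ht =>
        ⟨le_trans hp.1 ht.1, le_trans ht.2 hq.2⟩
      have hucont : ContinuousOn u (Icc p q) := by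
        have h1 : ContinuousOn (fun t => C t v) (Icc p q) := by
          refine (hGcont.continuousOn (s := Icc p q)).congr fun t ht => (hGg t (hIccsub ht)).symm
        exact h1.sub (Continuous.continuousOn (by
          exact continuous_const.add ((continuous_id.sub continuous_const).mul continuous_const)))
      obtain ⟨t₀, ht₀, hminOn⟩ := isCompact_Icc.exists_isMinOn ⟨p, le_refl p, hlt.le⟩ hucont
      have hmin : ∀ t ∈ Icc p q, u t₀ ≤ u t := fun t ht => hminOn ht
      set δ : ℝ := min (t₀ - p) (q - t₀) with hδ
      have hδ0 : 0 ≤ δ := le_min (by linarith [ht₀.1]) (by linarith [ht₀.2])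
      have hδ1 : δ ≤ t₀ - p := min_le_left _ _
      have hδ2 : δ ≤ q - t₀ := min_le_right _ _
      have h1 : t₀ - δ ∈ Icc p q := ⟨by linarith, by linarith⟩
      have h2 : t₀ + δ ∈ Icc p q := ⟨by linarith, by linarith⟩
      have hmid' := hmid (t₀ - δ) (t₀ + δ) (hIccsub h1) (hIccsub h2) (by linarith)
      have e : ((t₀ - δ) + (t₀ + δ)) / 2 = t₀ := by ring
      rw [e] at hmid'
      have hLsum : L (t₀ - δ) + L (t₀ + δ) = 2 * L t₀ := by simp only [hL]; ring
      have hum : u (t₀ - δ) + u (t₀ + δ) ≤ 2 * u t₀ := by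
        simp only [hu]
        linarith
      have hu1 := hmin _ h1
      have hu2 := hmin _ h2
      have hu0 : 0 ≤ u t₀ := by
        rcases le_total (t₀ - p) (q - t₀) with hcc | hcc
        · have hδeq : δ = t₀ - p := min_eq_left hcc
          have hteq : t₀ - δ = p := by rw [hδeq]; ring
          have hup : u p = 0 := by simp only [hu, hL]; ring
          rw [hteq] at hu1 hum
          linarith
        · have hδeq : δ = q - t₀ := min_eq_right hcc
          have hteq : t₀ + δ = q := by rw [hδeq]; ring
          have huq : u q = 0 := by
            have hne : q - p ≠ 0 := ne_of_gt hqp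
            simp only [hu, hL, hk]
            field_simp
            ring
          rw [hteq] at hu2 hum
          linarith
      set z : ℝ := α * p + β * q with hz
      have hzp : z - p = β * (q - p) := by
        simp only [hz]
        linear_combination p * hαβ
      have hzmem : z ∈ Icc p q := by
        constructor
        · nlinarith [mul_nonneg hβ hqp.le]
        · have : q - z = α * (q - p) := by simp only [hz]; linear_combination (-q) * hαβ
          nlinarith [mul_nonneg hα hqp.le]
      have huz : 0 ≤ u z := le_trans hu0 (hmin z hzmem)
      have hzk : (z - p) * k = β * (C q v - C p v) := by
        rw [hzp, hk]
        field_simp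
      simp only [hu, hL] at huz
      have hαe : α * C p v = C p v - β * C p v := by linear_combination (C p v) * hαβ
      rw [hαe]
      linarith
  refine ⟨convex_Icc 0 1, ?_⟩
  intro p hp q hq α β hα hβ hαβ
  simp only [smul_eq_mul]
  rcases le_total p q with hpq | hpq
  · exact main p q α β hp hq hpq hα hβ hαβ
  · have hres := main q p β α hq hp hpq hβ hα (by linarith)
    have e : β * q + α * p = α * p + β * q := by ring
    rw [e] at hres
    linarith
end

section
/- Let C be a 2-copula and define D(u,v) := (C⁻ * C)(u,v), where C⁻(u,v) = max(u+v−1,0) and * is the Markov product. Then ∂₁D(u,v) = ∂₁C(1−u, v) for almost all u and all v; consequently, C is stochastically increasing in the first component if and only if D is stochastically decreasing in the first component, and the map C ↦ C⁻ * C is an involution between the stochastically increasing and stochastically decreasing 2-copulas. -/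
open MeasureTheory Set Filter

namespace CopAux

/-- clamp to [0,1] -/
noncomputable def clamp (t : ℝ) : ℝ := max 0 (min 1 t)

lemma clamp_mem (t : ℝ) : clamp t ∈ Icc (0:ℝ) 1 :=
  ⟨le_max_left _ _, max_le zero_le_one (min_le_left _ _)⟩

lemma clamp_eq {t : ℝ} (ht : t ∈ Icc (0:ℝ) 1) : clamp t = t := by
  unfold clamp
  rw [min_eq_right ht.2, max_eq_right ht.1]

lemma clamp_mono : Monotone clamp :=
  fun x y h => max_le_max le_rfl (min_le_min le_rfl h)

lemma max_zero_lip {a b : ℝ} (h : a ≤ b) : max 0 b - max 0 a ≤ b - a := by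
  rcases le_total a 0 with h1 | h1 <;> rcases le_total b 0 with h2 | h2 <;>
    simp only [max_eq_left, max_eq_right, *] <;> linarith

lemma min_one_lip {a b : ℝ} (h : a ≤ b) : min 1 b - min 1 a ≤ b - a := by
  rcases le_total a 1 with h1 | h1 <;> rcases le_total b 1 with h2 | h2 <;>
    simp only [min_eq_left, min_eq_right, *] <;> linarith

lemma clamp_lip {x y : ℝ} (h : x ≤ y) : clamp y - clamp x ≤ y - x := by
  have h1 : min 1 x ≤ min 1 y := min_le_min le_rfl h
  have h2 := max_zero_lip h1
  have h3 := min_one_lip h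
  unfold clamp
  linarith

/-- "Nice" on [0,1]: monotone and 1-Lipschitz there. -/
def Nice (g : ℝ → ℝ) : Prop :=
  ∀ ⦃x y : ℝ⦄, x ∈ Icc (0:ℝ) 1 → y ∈ Icc (0:ℝ) 1 → x ≤ y →
    g x ≤ g y ∧ g y - g x ≤ y - x

/-- FTC for globally monotone 1-Lipschitz functions, via Stieltjes measures. -/
lemma ftc (f : ℝ → ℝ) (hm : Monotone f)
    (hl : ∀ ⦃x y : ℝ⦄, x ≤ y → f y - f x ≤ y - x) {a b : ℝ} (hab : a ≤ b) :
    ∫ t in a..b, deriv f t = f b - f a := by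
  have hlip : LipschitzWith 1 f := by
    apply LipschitzWith.of_dist_le_mul
    intro x y
    rw [Real.dist_eq, Real.dist_eq, NNReal.coe_one, one_mul]
    rcases le_total x y with h | h
    · rw [abs_sub_comm, abs_of_nonneg (sub_nonneg.2 (hm h))]
      calc f y - f x ≤ y - x := hl h
        _ ≤ |x - y| := by rw [abs_sub_comm]; exact le_abs_self _
    · rw [abs_of_nonneg (sub_nonneg.2 (hm h))]
      calc f x - f y ≤ x - y := hl h
        _ ≤ |x - y| := le_abs_self _
  set S : StieltjesFunction ℝ :=
    { toFun := f, mono' := hm,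
      right_continuous' := fun x => hlip.continuous.continuousWithinAt } with hS
  set T : StieltjesFunction ℝ :=
    { toFun := fun x => x - f x,
      mono' := fun x y h => by have := hl h; simp only; linarith,
      right_continuous' := fun x =>
        (continuous_id.sub hlip.continuous).continuousWithinAt } with hT
  have hvol : S.measure + T.measure = volume := by
    rw [← StieltjesFunction.measure_add, Real.volume_eq_stieltjes_id]
    congr 1
    ext x
    show f x + (x - f x) = x
    ring
  have hle : S.measure ≤ volume := by
    rw [← hvol]; exact Measure.le_add_right le_rfl
  have hac : S.measure ≪ volume := hle.absolutelyContinuous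
  have hae : ∀ᵐ x ∂(volume : Measure ℝ),
      deriv f x = (S.measure.rnDeriv volume x).toReal := by
    filter_upwards [S.ae_hasDerivAt] with x hx using hx.deriv
  calc ∫ t in a..b, deriv f t
      = ∫ t in a..b, (S.measure.rnDeriv volume t).toReal :=
        intervalIntegral.integral_congr_ae
          (hae.mono fun x hx _ => hx)
    _ = ∫ t in Ioc a b, (S.measure.rnDeriv volume t).toReal :=
        intervalIntegral.integral_of_le hab
    _ = (∫⁻ t in Ioc a b, S.measure.rnDeriv volume t).toReal :=
        integral_toReal (Measure.measurable_rnDeriv _ _).aemeasurable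
          (ae_restrict_of_ae (Measure.rnDeriv_lt_top _ _))
    _ = (S.measure (Ioc a b)).toReal := by
        rw [Measure.setLIntegral_rnDeriv hac]
    _ = f b - f a := by
        rw [StieltjesFunction.measure_Ioc]
        exact ENNReal.toReal_ofReal (sub_nonneg.2 (hm hab))


lemma nice_clamp {g : ℝ → ℝ} (hg : Nice g) :
    Monotone (fun t => g (clamp t)) ∧
      ∀ ⦃x y : ℝ⦄, x ≤ y → g (clamp y) - g (clamp x) ≤ y - x := by
  constructor
  · intro x y h
    exact (hg (clamp_mem x) (clamp_mem y) (clamp_mono h)).1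
  · intro x y h
    have h1 := (hg (clamp_mem x) (clamp_mem y) (clamp_mono h)).2
    have h2 := clamp_lip h
    linarith

lemma deriv_clamp_eq {g : ℝ → ℝ} {t : ℝ} (ht : t ∈ Ioo (0:ℝ) 1) :
    deriv g t = deriv (fun s => g (clamp s)) t := by
  have heq : g =ᶠ[nhds t] (fun s => g (clamp s)) := by
    filter_upwards [isOpen_Ioo.mem_nhds ht] with s hs
    rw [clamp_eq (Ioo_subset_Icc_self hs)]
  exact heq.deriv_eq

lemma ae_ne (c : ℝ) : ∀ᵐ t ∂(volume : Measure ℝ), t ≠ c := by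
  rw [ae_iff]
  have : {t : ℝ | ¬ t ≠ c} = {c} := by ext t; simp
  rw [this]; exact Real.volume_singleton

lemma markov_lf (g : ℝ → ℝ) (hg : Nice g) {u : ℝ} (hu : u ∈ Icc (0:ℝ) 1) :
    ∫ t in (0:ℝ)..1, deriv (fun s => max (u + s - 1) 0) t * deriv g t
      = g 1 - g (1 - u) := by
  set F := fun t => g (clamp t) with hF
  obtain ⟨hFm, hFl⟩ := nice_clamp hg
  have h1u : (0:ℝ) ≤ 1 - u := by linarith [hu.2]
  have hu1 : 1 - u ≤ (1:ℝ) := by linarith [hu.1]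
  have hmeq : ∀ᵐ t ∂(volume : Measure ℝ), t ∈ Set.uIoc (0:ℝ) 1 →
      deriv (fun s => max (u + s - 1) 0) t * deriv g t
        = indicator (Ioc (1-u) 1) (fun t => deriv F t) t := by
    filter_upwards [ae_ne (1-u), ae_ne 1] with t htu ht1 htI
    rw [uIoc_of_le (by norm_num : (0:ℝ) ≤ 1)] at htI
    have ht : t ∈ Ioc (0:ℝ) 1 := htI
    have ht' : t ∈ Ioo (0:ℝ) 1 := ⟨ht.1, lt_of_le_of_ne ht.2 ht1⟩
    have hgF : deriv g t = deriv F t := deriv_clamp_eq ht'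
    rcases lt_or_gt_of_ne htu with h | h
    · have hd : deriv (fun s => max (u + s - 1) 0) t = 0 := by
        have heq : (fun s : ℝ => max (u + s - 1) 0) =ᶠ[nhds t] (fun _ => (0:ℝ)) := by
          filter_upwards [Iio_mem_nhds h] with s hs
          exact max_eq_right (by simp only [mem_Iio] at hs; linarith)
        rw [heq.deriv_eq, deriv_const]
      rw [hd, zero_mul, indicator_of_notMem]
      intro hmem; exact absurd hmem.1 (not_lt.2 h.le)
    · have hd : deriv (fun s => max (u + s - 1) 0) t = 1 := by
        have heq : (fun s : ℝ => max (u + s - 1) 0) =ᶠ[nhds t]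
            (fun s => u + s - 1) := by
          filter_upwards [Ioi_mem_nhds h] with s hs
          exact max_eq_left (by simp only [mem_Ioi] at hs; linarith)
        rw [heq.deriv_eq]
        exact (((hasDerivAt_id t).const_add u).sub_const 1).deriv
      rw [hd, one_mul, hgF, indicator_of_mem (show t ∈ Ioc (1-u) 1 from ⟨h, ht.2⟩)]
  rw [intervalIntegral.integral_congr_ae hmeq,
    intervalIntegral.integral_of_le (by norm_num : (0:ℝ) ≤ 1),
    setIntegral_indicator measurableSet_Ioc]
  have hss : Ioc (0:ℝ) 1 ∩ Ioc (1-u) 1 = Ioc (1-u) 1 :=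
    inter_eq_self_of_subset_right (Ioc_subset_Ioc_left h1u)
  rw [hss, ← intervalIntegral.integral_of_le hu1, ftc F hFm hFl hu1]
  rw [hF]
  simp only
  rw [clamp_eq (right_mem_Icc.2 zero_le_one), clamp_eq ⟨h1u, hu1⟩]


lemma refl_convex {f g : ℝ → ℝ} {v : ℝ}
    (hfg : ∀ x ∈ Icc (0:ℝ) 1, g x = v - f (1 - x))
    (hf : ConcaveOn ℝ (Icc (0:ℝ) 1) f) : ConvexOn ℝ (Icc (0:ℝ) 1) g := by
  refine ⟨convex_Icc 0 1, fun x hx y hy a b ha hb hab => ?_⟩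
  have hx' : 1 - x ∈ Icc (0:ℝ) 1 := ⟨by linarith [hx.2], by linarith [hx.1]⟩
  have hy' : 1 - y ∈ Icc (0:ℝ) 1 := ⟨by linarith [hy.2], by linarith [hy.1]⟩
  have hz : a • x + b • y ∈ Icc (0:ℝ) 1 := (convex_Icc (0:ℝ) 1) hx hy ha hb hab
  rw [hfg _ hz, hfg _ hx, hfg _ hy]
  have hcc := hf.2 hx' hy' ha hb hab
  simp only [smul_eq_mul] at hcc ⊢
  have h1 : (1:ℝ) - (a * x + b * y) = a * (1 - x) + b * (1 - y) := by linarith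
  have e : a * (v - f (1 - x)) + b * (v - f (1 - y))
      = v - (a * f (1 - x) + b * f (1 - y)) := by linear_combination v * hab
  rw [h1]
  linarith

lemma refl_concave {f g : ℝ → ℝ} {v : ℝ}
    (hfg : ∀ x ∈ Icc (0:ℝ) 1, g x = v - f (1 - x))
    (hf : ConvexOn ℝ (Icc (0:ℝ) 1) f) : ConcaveOn ℝ (Icc (0:ℝ) 1) g := by
  refine ⟨convex_Icc 0 1, fun x hx y hy a b ha hb hab => ?_⟩
  have hx' : 1 - x ∈ Icc (0:ℝ) 1 := ⟨by linarith [hx.2], by linarith [hx.1]⟩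
  have hy' : 1 - y ∈ Icc (0:ℝ) 1 := ⟨by linarith [hy.2], by linarith [hy.1]⟩
  have hz : a • x + b • y ∈ Icc (0:ℝ) 1 := (convex_Icc (0:ℝ) 1) hx hy ha hb hab
  rw [hfg _ hz, hfg _ hx, hfg _ hy]
  have hcc := hf.2 hx' hy' ha hb hab
  simp only [smul_eq_mul] at hcc ⊢
  have h1 : (1:ℝ) - (a * x + b * y) = a * (1 - x) + b * (1 - y) := by linarith
  have e : a * (v - f (1 - x)) + b * (v - f (1 - y))
      = v - (a * f (1 - x) + b * f (1 - y)) := by linear_combination v * hab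
  rw [h1]
  linarith

end CopAux

theorem involution_lowerFrechet (C : ℝ → ℝ → ℝ) (hC : IsCopula C) :
    (∀ v ∈ Icc (0:ℝ) 1, ∀ᵐ u ∂(volume.restrict (Icc (0:ℝ) 1)),
      deriv (fun s => MarkovProduct (fun x y => max (x + y - 1) 0) C s v) u
        = deriv (fun s => C s v) (1 - u)) ∧
    (StochIncr C ↔ StochDecr (MarkovProduct (fun x y => max (x + y - 1) 0) C)) ∧
    (∀ u ∈ Icc (0:ℝ) 1, ∀ v ∈ Icc (0:ℝ) 1,
      MarkovProduct (fun x y => max (x + y - 1) 0)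
        (MarkovProduct (fun x y => max (x + y - 1) 0) C) u v = C u v) := by
  obtain ⟨hB1, hB2, h2inc⟩ := hC
  have h01 : (0:ℝ) ∈ Icc (0:ℝ) 1 := left_mem_Icc.2 zero_le_one
  have h11 : (1:ℝ) ∈ Icc (0:ℝ) 1 := right_mem_Icc.2 zero_le_one
  have hMono : ∀ v ∈ Icc (0:ℝ) 1, ∀ x y : ℝ, x ∈ Icc (0:ℝ) 1 → y ∈ Icc (0:ℝ) 1 →
      x ≤ y → C x v ≤ C y v ∧ C y v - C x v ≤ y - x := by
    intro v hv x y hx hy hxy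
    constructor
    · have h := h2inc x y 0 v hx hy h01 hv hxy hv.1
      have hx0 := (hB1 x hx).1
      have hy0 := (hB1 y hy).1
      linarith
    · have h := h2inc x y v 1 hx hy hv h11 hxy hv.2
      have hx1 := (hB1 x hx).2
      have hy1 := (hB1 y hy).2
      linarith
  have hNice : ∀ v ∈ Icc (0:ℝ) 1, CopAux.Nice (fun s => C s v) :=
    fun v hv x y hx hy hxy => hMono v hv x y hx hy hxy
  have hD : ∀ v ∈ Icc (0:ℝ) 1, ∀ u ∈ Icc (0:ℝ) 1,
      MarkovProduct (fun x y => max (x + y - 1) 0) C u v = v - C (1 - u) v := by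
    intro v hv u hu
    have h := CopAux.markov_lf (fun s => C s v) (hNice v hv) hu
    have h2 : MarkovProduct (fun x y => max (x + y - 1) 0) C u v
        = C 1 v - C (1 - u) v := h
    rw [h2, (hB2 v hv).2]
  refine ⟨?_, ⟨?_, ?_⟩, ?_⟩
  · -- part 1 : a.e. derivative
    intro v hv
    set F := fun t => C (CopAux.clamp t) v with hFdef
    have hFm : Monotone F := fun x y h =>
      (hMono v hv _ _ (CopAux.clamp_mem x) (CopAux.clamp_mem y) (CopAux.clamp_mono h)).1
    have hFd := hFm.ae_differentiableAt
    have hrefl : ∀ᵐ u ∂(volume : Measure ℝ), DifferentiableAt ℝ F (1 - u) := by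
      rw [ae_iff] at hFd ⊢
      have hmp := Measure.measurePreserving_sub_left (volume : Measure ℝ) 1
      have hset : {u : ℝ | ¬ DifferentiableAt ℝ F (1 - u)}
          = (fun u : ℝ => 1 - u) ⁻¹' {x | DifferentiableAt ℝ F x}ᶜ := rfl
      rw [hset, hmp.measure_preimage
        ((measurableSet_of_differentiableAt ℝ F).compl).nullMeasurableSet]
      exact hFd
    have key : ∀ᵐ u ∂(volume : Measure ℝ), u ∈ Ioo (0:ℝ) 1 →
        deriv (fun s => MarkovProduct (fun x y => max (x + y - 1) 0) C s v) u
          = deriv (fun s => C s v) (1 - u) := by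
      filter_upwards [hrefl] with u hdu hu01
      have h1u : 1 - u ∈ Ioo (0:ℝ) 1 := ⟨by linarith [hu01.2], by linarith [hu01.1]⟩
      have e1 : deriv (fun s => C s v) (1 - u) = deriv F (1 - u) :=
        CopAux.deriv_clamp_eq h1u
      have hFd' : HasDerivAt F (deriv F (1 - u)) (1 - u) := hdu.hasDerivAt
      have h2 : HasDerivAt (fun s : ℝ => 1 - s) (-1) u := (hasDerivAt_id u).const_sub 1
      have h3 := HasDerivAt.comp u hFd' h2
      have h4 := h3.const_sub v
      have h5 : HasDerivAt (fun s => v - F (1 - s)) (deriv F (1 - u)) u := by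
        simpa [Function.comp] using h4
      have heq : (fun s => MarkovProduct (fun x y => max (x + y - 1) 0) C s v)
          =ᶠ[nhds u] (fun s => v - F (1 - s)) := by
        filter_upwards [isOpen_Ioo.mem_nhds hu01] with s hs
        have hs' : s ∈ Icc (0:ℝ) 1 := Ioo_subset_Icc_self hs
        have h1s : 1 - s ∈ Icc (0:ℝ) 1 := ⟨by linarith [hs'.2], by linarith [hs'.1]⟩
        have hFs : F (1 - s) = C (1 - s) v := by
          simp only [hFdef]; rw [CopAux.clamp_eq h1s]
        rw [hD v hv s hs', hFs]
      rw [heq.deriv_eq, h5.deriv, e1]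
    have h0 : ∀ᵐ u ∂(volume.restrict (Icc (0:ℝ) 1)), u ∈ Ioo (0:ℝ) 1 := by
      filter_upwards [ae_restrict_mem measurableSet_Icc,
        (CopAux.ae_ne 0).filter_mono (ae_mono Measure.restrict_le_self),
        (CopAux.ae_ne 1).filter_mono (ae_mono Measure.restrict_le_self)] with u h1 h2 h3
      exact ⟨lt_of_le_of_ne h1.1 (Ne.symm h2), lt_of_le_of_ne h1.2 h3⟩
    filter_upwards [h0, key.filter_mono (ae_mono Measure.restrict_le_self)] with u h1 h2
    exact h2 h1
  · -- part 2, forward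
    intro hSI v hv
    exact CopAux.refl_convex (fun x hx => hD v hv x hx) (hSI v hv)
  · -- part 2, backward
    intro hSD v hv
    refine CopAux.refl_concave
      (f := fun s => MarkovProduct (fun x y => max (x + y - 1) 0) C s v)
      (v := v) ?_ (hSD v hv)
    intro x hx
    have hx' : 1 - x ∈ Icc (0:ℝ) 1 := ⟨by linarith [hx.2], by linarith [hx.1]⟩
    have h := hD v hv (1 - x) hx'
    have e : (1:ℝ) - (1 - x) = x := by ring
    rw [e] at h
    show C x v = v - MarkovProduct (fun x y => max (x + y - 1) 0) C (1 - x) v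
    linarith
  · -- part 3 : involution
    intro u hu v hv
    have h1u : 1 - u ∈ Icc (0:ℝ) 1 := ⟨by linarith [hu.2], by linarith [hu.1]⟩
    have hND : CopAux.Nice
        (fun s => MarkovProduct (fun x y => max (x + y - 1) 0) C s v) := by
      intro x y hx hy hxy
      have hx' : 1 - x ∈ Icc (0:ℝ) 1 := ⟨by linarith [hx.2], by linarith [hx.1]⟩
      have hy' : 1 - y ∈ Icc (0:ℝ) 1 := ⟨by linarith [hy.2], by linarith [hy.1]⟩
      have h := hMono v hv (1 - y) (1 - x) hy' hx' (by linarith)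
      constructor
      · show MarkovProduct (fun x y => max (x + y - 1) 0) C x v
          ≤ MarkovProduct (fun x y => max (x + y - 1) 0) C y v
        rw [hD v hv x hx, hD v hv y hy]
        linarith [h.1]
      · show MarkovProduct (fun x y => max (x + y - 1) 0) C y v
          - MarkovProduct (fun x y => max (x + y - 1) 0) C x v ≤ y - x
        rw [hD v hv x hx, hD v hv y hy]
        linarith [h.2]
    have h := CopAux.markov_lf _ hND hu
    have h2 : MarkovProduct (fun x y => max (x + y - 1) 0)
          (MarkovProduct (fun x y => max (x + y - 1) 0) C) u v
        = MarkovProduct (fun x y => max (x + y - 1) 0) C 1 v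
          - MarkovProduct (fun x y => max (x + y - 1) 0) C (1 - u) v := h
    rw [h2, hD v hv 1 h11, hD v hv (1 - u) h1u]
    have e1 : (1:ℝ) - 1 = 0 := by norm_num
    have e2 : (1:ℝ) - (1 - u) = u := by ring
    rw [e1, e2, (hB2 v hv).1]
    ring
end

section
/- If C₁ and C₂ are 2-copulas that are each stochastically increasing in the first component (u ↦ Cᵢ(u,v) concave for each v), then their Markov product C₁ * C₂ is also stochastically increasing in the first component. -/
open MeasureTheory Set Filter Topology

noncomputable def clamp (x : ℝ) : ℝ := max 0 (min 1 x)

lemma clamp_mono : Monotone clamp := fun _ _ h =>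
  max_le_max le_rfl (min_le_min le_rfl h)

lemma clamp_mem (x : ℝ) : clamp x ∈ Icc (0:ℝ) 1 :=
  ⟨le_max_left _ _, max_le zero_le_one (min_le_left _ _)⟩

lemma clamp_eq {x : ℝ} (hx : x ∈ Icc (0:ℝ) 1) : clamp x = x := by
  simp [clamp, min_eq_right hx.2, max_eq_right hx.1]

lemma clamp_lip (x y : ℝ) : |clamp x - clamp y| ≤ |x - y| := by
  refine le_trans ?_ (le_trans (abs_min_sub_min_le_max 1 x 1 y) ?_)
  · simpa [clamp, max_comm] using abs_max_sub_max_le_abs (min 1 x) (min 1 y) 0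
  · simp

lemma lipschitzWith_one_of_abs {f : ℝ → ℝ} (h : ∀ x y, |f x - f y| ≤ |x - y|) :
    LipschitzWith 1 f := by
  refine LipschitzWith.of_dist_le_mul fun x y => ?_
  simpa [Real.dist_eq] using h x y

/-- slope of a monotone 1-Lipschitz function is in [0,1]. -/
lemma slope_abs {f : ℝ → ℝ} (hm : Monotone f) {x y : ℝ} (hxy : x ≠ y) :
    slope f x y = |f y - f x| / |y - x| := by
  rcases lt_or_gt_of_ne hxy with h | h
  · rw [slope_def_field, div_eq_div_iff (by intro h; apply hxy; linarith [sub_eq_zero.1 h]) (abs_pos.2 (sub_ne_zero.2 (Ne.symm hxy))).ne']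
    rw [abs_of_nonneg (sub_nonneg.2 (hm h.le)), abs_of_pos (by linarith : (0:ℝ) < y - x)]
  · rw [slope_def_field, div_eq_div_iff (by intro h; apply hxy; linarith [sub_eq_zero.1 h]) (abs_pos.2 (sub_ne_zero.2 (Ne.symm hxy))).ne']
    rw [abs_of_nonpos (sub_nonpos.2 (hm h.le)), abs_of_neg (by linarith : y - x < 0)]
    ring

lemma deriv_mem_Icc {f : ℝ → ℝ} (hm : Monotone f) (hl : LipschitzWith 1 f) (x : ℝ) :
    deriv f x ∈ Icc (0:ℝ) 1 := by
  by_cases hd : DifferentiableAt ℝ f x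
  · have ht : Tendsto (slope f x) (𝓝[≠] x) (𝓝 (deriv f x)) :=
      hasDerivAt_iff_tendsto_slope.1 hd.hasDerivAt
    have hev : ∀ᶠ y in 𝓝[≠] x, slope f x y ∈ Icc (0:ℝ) 1 := by
      filter_upwards [self_mem_nhdsWithin] with y (hy : y ≠ x)
      rw [slope_abs hm (Ne.symm hy)]
      constructor
      · positivity
      · rw [div_le_one (by simpa [abs_pos, sub_eq_zero] using hy)]
        simpa [Real.dist_eq] using hl.dist_le_mul y x
    exact ⟨ge_of_tendsto ht (hev.mono fun y h => h.1),
      le_of_tendsto ht (hev.mono fun y h => h.2)⟩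
  · simp [deriv_zero_of_not_differentiableAt hd]


/-- FTC for a monotone 1-Lipschitz function on ℝ. -/
lemma integral_deriv_monotone_lipschitz {f : ℝ → ℝ} (hm : Monotone f)
    (hl : LipschitzWith 1 f) {a b : ℝ} (hab : a ≤ b) :
    ∫ t in a..b, deriv f t = f b - f a := by
  have hcont : Continuous f := hl.continuous
  have hint : ∀ c d : ℝ, IntervalIntegrable f volume c d := fun c d =>
    hcont.intervalIntegrable c d
  set δ : ℕ → ℝ := fun n => 1 / (n + 1) with hδ
  have hδpos : ∀ n, 0 < δ n := fun n => by positivity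
  have hδlim : Tendsto δ atTop (𝓝 0) := tendsto_one_div_add_atTop_nhds_zero_nat
  set φ : ℕ → ℝ → ℝ := fun n x => (f (x + δ n) - f x) / δ n with hφ
  -- each φ n is bounded by 1 in abs
  have hφ01 : ∀ n x, φ n x ∈ Icc (0:ℝ) 1 := by
    intro n x
    constructor
    · apply div_nonneg _ (hδpos n).le
      exact sub_nonneg.2 (hm (by linarith [hδpos n]))
    · rw [div_le_one (hδpos n)]
      have := hl.dist_le_mul (x + δ n) x
      rw [Real.dist_eq, Real.dist_eq] at this
      have h2 : |f (x + δ n) - f x| ≤ δ n := by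
        simpa [abs_of_pos (hδpos n)] using this
      exact (le_abs_self _).trans h2
  -- the integral of φ n over a..b
  have hφint : ∀ n, ∫ x in a..b, φ n x =
      ((∫ x in b..(b + δ n), f x) - ∫ x in a..(a + δ n), f x) / δ n := by
    intro n
    have h1 : ∫ x in a..b, f (x + δ n) = ∫ x in (a + δ n)..(b + δ n), f x :=
      intervalIntegral.integral_comp_add_right f (δ n)
    have hintshift : IntervalIntegrable (fun x => f (x + δ n)) volume a b :=
      (hcont.comp (continuous_id.add continuous_const)).intervalIntegrable a b
    have h2 : ∫ x in a..b, φ n x =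
        ((∫ x in a..b, f (x + δ n)) - ∫ x in a..b, f x) / δ n := by
      rw [eq_div_iff (hδpos n).ne']
      rw [← intervalIntegral.integral_sub hintshift (hint a b)]
      rw [← intervalIntegral.integral_mul_const]
      congr 1; ext x; simp only [hφ]; exact div_mul_cancel₀ _ (hδpos n).ne'
    rw [h2, h1]
    congr 1
    have c1 := intervalIntegral.integral_add_adjacent_intervals
      (hint a (a + δ n)) (hint (a + δ n) (b + δ n))
    have c2 := intervalIntegral.integral_add_adjacent_intervals (hint a b) (hint b (b + δ n))
    linarith
  -- (∫ x in c..(c+δ n), f) / δ n → f c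
  have hend : ∀ c : ℝ, Tendsto (fun n => (∫ x in c..(c + δ n), f x) / δ n) atTop (𝓝 (f c)) := by
    intro c
    have key : ∀ n, |(∫ x in c..(c + δ n), f x) / δ n - f c| ≤ δ n := by
      intro n
      have : (∫ x in c..(c + δ n), f x) / δ n - f c
          = (∫ x in c..(c + δ n), (f x - f c)) / δ n := by
        rw [intervalIntegral.integral_sub (hint _ _) (intervalIntegrable_const)]
        rw [intervalIntegral.integral_const]
        rw [add_sub_cancel_left, smul_eq_mul, sub_div, mul_div_cancel_left₀ _ (hδpos n).ne']
      rw [this, abs_div, abs_of_pos (hδpos n), div_le_iff₀ (hδpos n)]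
      have : ∀ x ∈ Set.uIoc c (c + δ n), ‖f x - f c‖ ≤ δ n := by
        intro x hx
        rw [Set.uIoc_of_le (by linarith [hδpos n])] at hx
        have h3 : |f x - f c| ≤ |x - c| := by
          simpa [Real.dist_eq] using hl.dist_le_mul x c
        rw [Real.norm_eq_abs]
        refine h3.trans ?_
        rw [abs_of_pos (sub_pos.2 hx.1)]
        linarith [hx.2]
      have hb := intervalIntegral.norm_integral_le_of_norm_le_const this
      simpa [Real.norm_eq_abs, abs_of_pos (hδpos n)] using hb
    have h0 : Tendsto (fun n => (∫ x in c..(c + δ n), f x) / δ n - f c) atTop (𝓝 0) := by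
      apply squeeze_zero_norm key hδlim
    have := h0.add_const (f c)
    simpa using this
  -- whole integral tends to f b - f a
  have hlim1 : Tendsto (fun n => ∫ x in a..b, φ n x) atTop (𝓝 (f b - f a)) := by
    simp_rw [hφint]
    simp_rw [sub_div]
    exact (hend b).sub (hend a)
  -- dominated convergence: integral tends to ∫ deriv
  have hmeas : Measurable f := hm.measurable
  have hlim2 : Tendsto (fun n => ∫ x in Ioc a b, φ n x) atTop
      (𝓝 (∫ x in Ioc a b, deriv f x)) := by
    apply MeasureTheory.tendsto_integral_of_dominated_convergence (fun _ => (1:ℝ))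
    · intro n
      exact ((hmeas.comp (measurable_id.add_const (δ n))).sub hmeas).div_const (δ n)
        |>.aestronglyMeasurable
    · exact integrable_const 1
    · intro n
      filter_upwards with x
      have := hφ01 n x
      rw [Real.norm_eq_abs, abs_le]
      exact ⟨by linarith [this.1], this.2⟩
    · have hae : ∀ᵐ x : ℝ, DifferentiableAt ℝ f x := hm.ae_differentiableAt
      refine (ae_restrict_of_ae ?_)
      filter_upwards [hae] with x hx
      have ht : Tendsto (slope f x) (𝓝[≠] x) (𝓝 (deriv f x)) :=
        hasDerivAt_iff_tendsto_slope.1 hx.hasDerivAt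
      have hseq : Tendsto (fun n => x + δ n) atTop (𝓝[≠] x) := by
        apply tendsto_nhdsWithin_of_tendsto_nhds_of_eventually_within
        · simpa using (tendsto_const_nhds.add hδlim)
        · filter_upwards with n
          simp only [Set.mem_compl_iff, Set.mem_singleton_iff]
          intro h; exact absurd (by linarith [hδpos n] : x < x + δ n) (by rw [h]; exact lt_irrefl x)
      have := ht.comp hseq
      convert this using 2 with n
      simp only [hφ, Function.comp_apply, slope_def_field]
      congr 1
      ring
  have heq : ∀ n, ∫ x in a..b, φ n x = ∫ x in Ioc a b, φ n x := fun n =>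
    intervalIntegral.integral_of_le hab
  rw [intervalIntegral.integral_of_le hab]
  simp_rw [heq] at hlim1
  exact tendsto_nhds_unique hlim2 hlim1


lemma key_ineq (k g : ℝ → ℝ) (hk : Measurable k) (hkb : ∀ t ∈ Ioo (0:ℝ) 1, |k t| ≤ 2)
    (hg : Antitone g) (hg01 : ∀ t, g t ∈ Icc (0:ℝ) 1)
    (H : ∀ s ∈ Icc (0:ℝ) 1, 0 ≤ ∫ t in (0:ℝ)..s, k t) :
    0 ≤ ∫ t in Ioo (0:ℝ) 1, k t * g t := by
  have hgmeas : Measurable g := hg.measurable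
  set μ := volume.restrict (Ioo (0:ℝ) 1) with hμ
  set ν := volume.restrict (Ioc (0:ℝ) 1) with hν
  haveI : IsFiniteMeasure μ := by
    constructor; rw [hμ, Measure.restrict_apply_univ, Real.volume_Ioo]; simp
  haveI : IsFiniteMeasure ν := by
    constructor; rw [hν, Measure.restrict_apply_univ, Real.volume_Ioc]; simp
  set S : Set (ℝ × ℝ) := {p | p.1 ∈ Ioo (0:ℝ) 1 ∧ p.2 < g p.1} with hS
  have hSmeas : MeasurableSet S := by
    apply MeasurableSet.inter
    · exact measurable_fst measurableSet_Ioo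
    · have hm : Measurable fun p : ℝ × ℝ => g p.1 - p.2 :=
        (hgmeas.comp measurable_fst).sub measurable_snd
      have h2 := hm (measurableSet_Ioi (a := (0:ℝ)))
      have e : {p : ℝ × ℝ | p.2 < g p.1} = (fun p : ℝ × ℝ => g p.1 - p.2) ⁻¹' Ioi 0 := by
        ext p; simp [sub_pos]
      rw [← e] at h2; exact h2
  set F : ℝ × ℝ → ℝ := S.indicator (fun p => k p.1) with hF
  have hFmeas : Measurable F := (hk.comp measurable_fst).indicator hSmeas
  have hFbound : ∀ p, ‖F p‖ ≤ 2 := by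
    intro p
    rw [hF]
    by_cases hp : p ∈ S
    · rw [indicator_of_mem hp]
      exact (hkb p.1 hp.1).trans_eq' rfl
    · rw [indicator_of_notMem hp]; norm_num
  have hFint : Integrable F (μ.prod ν) := by
    refine Integrable.mono' (integrable_const 2) hFmeas.aestronglyMeasurable ?_
    filter_upwards with p using hFbound p
  -- inner identity in t
  have hinner : ∀ t ∈ Ioo (0:ℝ) 1, ∫ y, F (t, y) ∂ν = k t * g t := by
    intro t ht
    have h1 : (fun y => F (t, y)) = (Iio (g t)).indicator (fun _ => k t) := by
      ext y
      by_cases hy : y < g t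
      · rw [hF, indicator_of_mem (show (t,y) ∈ S from ⟨ht, hy⟩),
          indicator_of_mem (mem_Iio.2 hy)]
      · rw [hF, indicator_of_notMem (show (t,y) ∉ S from fun h => hy h.2),
          indicator_of_notMem (fun h => hy (mem_Iio.1 h))]
    rw [h1, hν]
    rw [setIntegral_indicator measurableSet_Iio]
    have h2 : Ioc (0:ℝ) 1 ∩ Iio (g t) = Ioo 0 (g t) := by
      ext y
      constructor
      · rintro ⟨⟨hy1, _⟩, hy3⟩; exact ⟨hy1, hy3⟩
      · rintro ⟨hy1, hy2⟩; exact ⟨⟨hy1, (hy2.le.trans (hg01 t).2)⟩, hy2⟩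
    rw [h2, setIntegral_const, Real.volume_real_Ioo_of_le (hg01 t).1, sub_zero,
      smul_eq_mul, mul_comm]
  -- outer nonnegativity in y
  have houter : ∀ y : ℝ, 0 ≤ ∫ t, F (t, y) ∂μ := by
    intro y
    set A : Set ℝ := Ioo (0:ℝ) 1 ∩ {t | y < g t} with hA
    have hAmeas : MeasurableSet A := by
      apply measurableSet_Ioo.inter
      have hm : Measurable fun t : ℝ => g t - y := hgmeas.sub measurable_const
      have h2 := hm (measurableSet_Ioi (a := (0:ℝ)))
      convert h2 using 1
      ext t; show y < g t ↔ g t - y ∈ Ioi 0; simp [sub_pos]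
    have h1 : (fun t => F (t, y)) = A.indicator k := by
      ext t
      by_cases htA : t ∈ A
      · rw [hF, indicator_of_mem (show (t,y) ∈ S from ⟨htA.1, htA.2⟩), indicator_of_mem htA]
      · rw [hF, indicator_of_notMem (show (t,y) ∉ S from fun h => htA ⟨h.1, h.2⟩),
          indicator_of_notMem htA]
    rw [h1, hμ, setIntegral_indicator hAmeas]
    set τ := sSup (insert (0:ℝ) A) with hτ
    have hbdd : BddAbove (insert (0:ℝ) A) := by
      refine ⟨1, ?_⟩
      rintro x (rfl | hx)
      · exact zero_le_one
      · exact hx.1.2.le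
    have hτ0 : 0 ≤ τ := le_csSup hbdd (mem_insert _ _)
    have hτ1 : τ ≤ 1 := by
      apply csSup_le (insert_nonempty _ _)
      rintro x (rfl | hx)
      · exact zero_le_one
      · exact hx.1.2.le
    have hsub1 : A ⊆ Ioc 0 τ := fun t ht =>
      ⟨ht.1.1, le_csSup hbdd (mem_insert_of_mem _ ht)⟩
    have hsub2 : Ioo 0 τ ⊆ A := by
      rintro t ⟨ht0, htτ⟩
      obtain ⟨s, hs, hts⟩ := exists_lt_of_lt_csSup (insert_nonempty _ _) htτ
      rcases hs with rfl | hsA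
      · exact absurd hts (not_lt.2 ht0.le)
      · exact ⟨⟨ht0, hts.trans hsA.1.2⟩, lt_of_lt_of_le hsA.2 (hg hts.le)⟩
    have haeeq : (Ioo (0:ℝ) 1 ∩ A : Set ℝ) =ᵐ[volume] Ioc 0 τ := by
      have hinter : Ioo (0:ℝ) 1 ∩ A = A := inter_eq_self_of_subset_right (fun t ht => ht.1)
      rw [hinter]
      rw [MeasureTheory.ae_eq_set]
      constructor
      · refine measure_mono_null (fun t ht => ?_) (measure_empty (μ := volume))
        exact absurd (hsub1 ht.1) ht.2
      · refine measure_mono_null (fun t ht => ?_) (Real.volume_singleton (a := τ))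
        rcases ht with ⟨⟨ht0, htτ⟩, htA⟩
        rcases lt_or_eq_of_le htτ with h | h
        · exact absurd (hsub2 ⟨ht0, h⟩) htA
        · exact h
    rw [setIntegral_congr_set haeeq, ← intervalIntegral.integral_of_le hτ0]
    exact H τ ⟨hτ0, hτ1⟩
  -- assemble
  have swap := MeasureTheory.integral_integral_swap (f := fun t y => F (t, y)) (by exact hFint)
  have step1 : ∫ t in Ioo (0:ℝ) 1, k t * g t = ∫ t, (∫ y, F (t, y) ∂ν) ∂μ := by
    rw [hμ]
    apply setIntegral_congr_fun measurableSet_Ioo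
    intro t ht
    exact (hinner t ht).symm
  rw [step1, swap]
  apply integral_nonneg
  intro y
  exact houter y

/-- section in the 2nd variable of a copula is monotone after clamping -/
lemma IsCopula.mono2 {C : ℝ → ℝ → ℝ} (hC : IsCopula C) {w : ℝ} (hw : w ∈ Icc (0:ℝ) 1) :
    Monotone (fun t => C w (clamp t)) := by
  intro t₁ t₂ h
  have h1 : clamp t₁ ≤ clamp t₂ := max_le_max le_rfl (min_le_min le_rfl h)
  have := hC.2.2 0 w (clamp t₁) (clamp t₂) ⟨le_rfl, zero_le_one⟩ hw
    (clamp_mem t₁) (clamp_mem t₂) hw.1 h1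
  have e1 := (hC.2.1 (clamp t₁) (clamp_mem t₁)).1
  have e2 := (hC.2.1 (clamp t₂) (clamp_mem t₂)).1
  show C w (clamp t₁) ≤ C w (clamp t₂)
  linarith

lemma IsCopula.lip2 {C : ℝ → ℝ → ℝ} (hC : IsCopula C) {w : ℝ} (hw : w ∈ Icc (0:ℝ) 1) :
    LipschitzWith 1 (fun t => C w (clamp t)) := by
  refine LipschitzWith.of_dist_le_mul fun t₁ t₂ => ?_
  rw [Real.dist_eq, Real.dist_eq, NNReal.coe_one, one_mul]
  rcases le_total t₁ t₂ with h | h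
  · have h1 : clamp t₁ ≤ clamp t₂ := max_le_max le_rfl (min_le_min le_rfl h)
    have h2 := hC.2.2 w 1 (clamp t₁) (clamp t₂) hw ⟨zero_le_one, le_rfl⟩
      (clamp_mem t₁) (clamp_mem t₂) hw.2 h1
    have e1 := (hC.2.1 (clamp t₁) (clamp_mem t₁)).2
    have e2 := (hC.2.1 (clamp t₂) (clamp_mem t₂)).2
    have hmono := hC.mono2 hw h
    simp only at h2 e1 e2 hmono ⊢
    rw [abs_of_nonpos (by linarith), abs_of_nonpos (by linarith)]
    have := clamp_lip t₁ t₂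
    rw [abs_of_nonpos (by linarith), abs_of_nonpos (by linarith)] at this
    linarith
  · have h1 : clamp t₂ ≤ clamp t₁ := max_le_max le_rfl (min_le_min le_rfl h)
    have h2 := hC.2.2 w 1 (clamp t₂) (clamp t₁) hw ⟨zero_le_one, le_rfl⟩
      (clamp_mem t₂) (clamp_mem t₁) hw.2 h1
    have e1 := (hC.2.1 (clamp t₁) (clamp_mem t₁)).2
    have e2 := (hC.2.1 (clamp t₂) (clamp_mem t₂)).2
    have hmono := hC.mono2 hw h
    simp only at h2 e1 e2 hmono ⊢
    rw [abs_of_nonneg (by linarith), abs_of_nonneg (by linarith)]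
    have := clamp_lip t₁ t₂
    rw [abs_of_nonneg (by linarith), abs_of_nonneg (by linarith)] at this
    linarith

/-- section in the 1st variable of a copula is monotone after clamping -/
lemma IsCopula.mono1 {C : ℝ → ℝ → ℝ} (hC : IsCopula C) {w : ℝ} (hw : w ∈ Icc (0:ℝ) 1) :
    Monotone (fun t => C (clamp t) w) := by
  intro t₁ t₂ h
  have h1 : clamp t₁ ≤ clamp t₂ := max_le_max le_rfl (min_le_min le_rfl h)
  have := hC.2.2 (clamp t₁) (clamp t₂) 0 w (clamp_mem t₁) (clamp_mem t₂)
    ⟨le_rfl, zero_le_one⟩ hw h1 hw.1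
  have e1 := (hC.1 (clamp t₁) (clamp_mem t₁)).1
  have e2 := (hC.1 (clamp t₂) (clamp_mem t₂)).1
  show C (clamp t₁) w ≤ C (clamp t₂) w
  linarith

lemma IsCopula.lip1 {C : ℝ → ℝ → ℝ} (hC : IsCopula C) {w : ℝ} (hw : w ∈ Icc (0:ℝ) 1) :
    LipschitzWith 1 (fun t => C (clamp t) w) := by
  refine LipschitzWith.of_dist_le_mul fun t₁ t₂ => ?_
  rw [Real.dist_eq, Real.dist_eq, NNReal.coe_one, one_mul]
  rcases le_total t₁ t₂ with h | h
  · have h1 : clamp t₁ ≤ clamp t₂ := max_le_max le_rfl (min_le_min le_rfl h)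
    have h2 := hC.2.2 (clamp t₁) (clamp t₂) w 1 (clamp_mem t₁) (clamp_mem t₂)
      hw ⟨zero_le_one, le_rfl⟩ h1 hw.2
    have e1 := (hC.1 (clamp t₁) (clamp_mem t₁)).2
    have e2 := (hC.1 (clamp t₂) (clamp_mem t₂)).2
    have hmono := hC.mono1 hw h
    simp only at h2 e1 e2 hmono ⊢
    rw [abs_of_nonpos (by linarith), abs_of_nonpos (by linarith)]
    have := clamp_lip t₁ t₂
    rw [abs_of_nonpos (by linarith), abs_of_nonpos (by linarith)] at this
    linarith
  · have h1 : clamp t₂ ≤ clamp t₁ := max_le_max le_rfl (min_le_min le_rfl h)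
    have h2 := hC.2.2 (clamp t₂) (clamp t₁) w 1 (clamp_mem t₂) (clamp_mem t₁)
      hw ⟨zero_le_one, le_rfl⟩ h1 hw.2
    have e1 := (hC.1 (clamp t₁) (clamp_mem t₁)).2
    have e2 := (hC.1 (clamp t₂) (clamp_mem t₂)).2
    have hmono := hC.mono1 hw h
    simp only at h2 e1 e2 hmono ⊢
    rw [abs_of_nonneg (by linarith), abs_of_nonneg (by linarith)]
    have := clamp_lip t₁ t₂
    rw [abs_of_nonneg (by linarith), abs_of_nonneg (by linarith)] at this
    linarith


theorem stochIncr_markovProduct (C₁ C₂ : ℝ → ℝ → ℝ) (h₁ : IsCopula C₁) (h₂ : IsCopula C₂)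
    (hSI₁ : StochIncr C₁) (hSI₂ : StochIncr C₂) : StochIncr (MarkovProduct C₁ C₂) := by
  intro v hv
  refine ⟨convex_Icc 0 1, ?_⟩
  intro x hx y hy a b ha hb hab
  simp only [smul_eq_mul]
  set u : ℝ := a * x + b * y with hu
  have hu' : u ∈ Icc (0:ℝ) 1 := by
    constructor
    · have := hx.1; have := hy.1; positivity
    · nlinarith [hx.2, hy.2]
  -- generic a.e. fact
  have hne1 : ∀ᵐ t : ℝ, t ≠ (1:ℝ) := by
    rw [MeasureTheory.ae_iff]
    convert Real.volume_singleton (a := (1:ℝ)) using 2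
    ext r; simp
  -- section derivatives of C₁ in second variable
  have fw_eq : ∀ w ∈ Icc (0:ℝ) 1, ∀ t ∈ Ioo (0:ℝ) 1,
      deriv (fun s => C₁ w s) t = deriv (fun s => C₁ w (clamp s)) t := by
    intro w hw t ht
    apply Filter.EventuallyEq.deriv_eq
    filter_upwards [isOpen_Ioo.mem_nhds ht] with r hr
    rw [clamp_eq (Ioo_subset_Icc_self hr)]
  have fw_mem : ∀ w ∈ Icc (0:ℝ) 1, ∀ t ∈ Ioo (0:ℝ) 1,
      deriv (fun s => C₁ w s) t ∈ Icc (0:ℝ) 1 := by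
    intro w hw t ht
    rw [fw_eq w hw t ht]
    exact deriv_mem_Icc (h₁.mono2 hw) (h₁.lip2 hw) t
  have FTC₁ : ∀ w ∈ Icc (0:ℝ) 1, ∀ s ∈ Icc (0:ℝ) 1,
      ∫ t in (0:ℝ)..s, deriv (fun r => C₁ w r) t = C₁ w s := by
    intro w hw s hs
    have h0 : ∫ t in (0:ℝ)..s, deriv (fun r => C₁ w (clamp r)) t = C₁ w s - C₁ w 0 := by
      rw [integral_deriv_monotone_lipschitz (h₁.mono2 hw) (h₁.lip2 hw) hs.1,
        clamp_eq hs, clamp_eq ⟨le_rfl, zero_le_one⟩]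
    have hcongr : ∫ t in (0:ℝ)..s, deriv (fun r => C₁ w r) t
        = ∫ t in (0:ℝ)..s, deriv (fun r => C₁ w (clamp r)) t := by
      apply intervalIntegral.integral_congr_ae
      filter_upwards [hne1] with t ht1 htI
      rw [Set.uIoc_of_le hs.1] at htI
      exact fw_eq w hw t ⟨htI.1, lt_of_le_of_ne (htI.2.trans hs.2) ht1⟩
    rw [hcongr, h0, (h₁.1 w hw).1, sub_zero]
  have intInt : ∀ w ∈ Icc (0:ℝ) 1, ∀ s ∈ Icc (0:ℝ) 1,
      IntervalIntegrable (fun t => deriv (fun r => C₁ w r) t) volume 0 s := by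
    intro w hw s hs
    rw [intervalIntegrable_iff_integrableOn_Ioc_of_le hs.1]
    refine Integrable.mono' (integrable_const 1) (measurable_deriv _).aestronglyMeasurable ?_
    filter_upwards [ae_restrict_mem measurableSet_Ioc, ae_restrict_of_ae hne1] with t ht hne
    have htIoo : t ∈ Ioo (0:ℝ) 1 := ⟨ht.1, lt_of_le_of_ne (ht.2.trans hs.2) hne⟩
    have hmem := fw_mem w hw t htIoo
    rw [Real.norm_eq_abs, abs_le]
    exact ⟨by linarith [hmem.1], hmem.2⟩
  -- the function k
  set k : ℝ → ℝ := fun t => deriv (fun s => C₁ u s) t - a * deriv (fun s => C₁ x s) t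
    - b * deriv (fun s => C₁ y s) t with hk
  have hkmeas : Measurable k := by
    exact ((measurable_deriv _).sub ((measurable_deriv _).const_mul a)).sub
      ((measurable_deriv _).const_mul b)
  have hkb : ∀ t ∈ Ioo (0:ℝ) 1, |k t| ≤ 2 := by
    intro t ht
    have m1 := fw_mem u hu' t ht
    have m2 := fw_mem x hx t ht
    have m3 := fw_mem y hy t ht
    rw [hk, abs_le]
    constructor
    · simp only
      nlinarith [m1.1, m2.2, m3.2, m1.2, m2.1, m3.1]
    · simp only
      nlinarith [m1.1, m2.2, m3.2, m1.2, m2.1, m3.1]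
  have H : ∀ s ∈ Icc (0:ℝ) 1, 0 ≤ ∫ t in (0:ℝ)..s, k t := by
    intro s hs
    have hi1 := intInt u hu' s hs
    have hi2 := (intInt x hx s hs).const_mul a
    have hi3 := (intInt y hy s hs).const_mul b
    rw [hk]
    rw [intervalIntegral.integral_sub (hi1.sub hi2) hi3,
      intervalIntegral.integral_sub hi1 hi2,
      intervalIntegral.integral_const_mul, intervalIntegral.integral_const_mul,
      FTC₁ u hu' s hs, FTC₁ x hx s hs, FTC₁ y hy s hs]
    have := (hSI₁ s hs).2 hx hy ha hb hab
    simp only [smul_eq_mul] at this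
    linarith
  -- the function g coming from C₂
  set g : ℝ → ℝ := fun t => deriv (fun s => C₂ s v) t with hg
  have g_ev : ∀ t ∈ Ioo (0:ℝ) 1, (fun s => C₂ s v) =ᶠ[nhds t] (fun s => C₂ (clamp s) v) := by
    intro t ht
    filter_upwards [isOpen_Ioo.mem_nhds ht] with r hr
    rw [clamp_eq (Ioo_subset_Icc_self hr)]
  have g_eq : ∀ t ∈ Ioo (0:ℝ) 1, g t = deriv (fun s => C₂ (clamp s) v) t := by
    intro t ht
    exact (g_ev t ht).deriv_eq
  have g_mem : ∀ t ∈ Ioo (0:ℝ) 1, g t ∈ Icc (0:ℝ) 1 := by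
    intro t ht
    rw [g_eq t ht]
    exact deriv_mem_Icc (h₂.mono1 hv) (h₂.lip1 hv) t
  set D : Set ℝ := {t | t ∈ Ioo (0:ℝ) 1 ∧ DifferentiableAt ℝ (fun s => C₂ s v) t} with hD
  have hDae : ∀ᵐ t ∂(volume.restrict (Ioo (0:ℝ) 1)), t ∈ D := by
    have h2 := (h₂.mono1 hv).ae_differentiableAt
    filter_upwards [ae_restrict_of_ae h2, ae_restrict_mem measurableSet_Ioo] with t hdiff htIoo
    exact ⟨htIoo, (g_ev t htIoo).symm.differentiableAt_iff.1 hdiff⟩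
  have hganti : ∀ s ∈ D, ∀ t ∈ D, s ≤ t → g t ≤ g s := by
    intro s hs t ht hst
    rcases eq_or_lt_of_le hst with rfl | hlt
    · exact le_rfl
    have hconv : ConvexOn ℝ (Icc (0:ℝ) 1) (fun r => -(C₂ r v)) := (hSI₂ v hv).neg
    have h1 := hconv.deriv_le_slope (Ioo_subset_Icc_self hs.1) (Ioo_subset_Icc_self ht.1)
      hlt hs.2.neg
    have h2 := hconv.slope_le_deriv (Ioo_subset_Icc_self hs.1) (Ioo_subset_Icc_self ht.1)
      hlt ht.2.neg
    have e1 : deriv (fun r => -(C₂ r v)) s = -(g s) := by rw [hg]; exact deriv.neg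
    have e2 : deriv (fun r => -(C₂ r v)) t = -(g t) := by rw [hg]; exact deriv.neg
    rw [e1] at h1
    rw [e2] at h2
    linarith [h1.trans h2]
  -- antitone envelope of g
  set G : ℝ → ℝ := fun t => sSup (g '' (D ∩ Ici t)) with hG
  have hbddG : ∀ t : ℝ, BddAbove (g '' (D ∩ Ici t)) := by
    intro t
    refine ⟨1, ?_⟩
    rintro r ⟨s, hs, rfl⟩
    exact (g_mem s hs.1.1).2
  have hGmem : ∀ t, G t ∈ Icc (0:ℝ) 1 := by
    intro t
    rcases (D ∩ Ici t).eq_empty_or_nonempty with he | hne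
    · rw [hG]; simp only [he, image_empty, Real.sSup_empty]
      exact ⟨le_rfl, zero_le_one⟩
    · obtain ⟨r, hr⟩ := id hne
      constructor
      · exact le_trans (g_mem r hr.1.1).1 (le_csSup (hbddG t) (mem_image_of_mem _ hr))
      · apply csSup_le (hne.image g)
        rintro _ ⟨s, hs, rfl⟩
        exact (g_mem s hs.1.1).2
  have hGanti : Antitone G := by
    intro s t hst
    rcases (D ∩ Ici t).eq_empty_or_nonempty with he | hne
    · rw [hG]; simp only [he, image_empty, Real.sSup_empty]
      exact (hGmem s).1
    · apply csSup_le_csSup (hbddG s) (hne.image g)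
      exact image_mono (inter_subset_inter_right _ (Ici_subset_Ici.2 hst))
  have hGeq : ∀ t ∈ D, G t = g t := by
    intro t ht
    apply le_antisymm
    · refine csSup_le ⟨g t, mem_image_of_mem _ ⟨ht, mem_Ici.2 le_rfl⟩⟩ ?_
      rintro _ ⟨s, hs, rfl⟩
      exact hganti t ht s hs.1 hs.2
    · exact le_csSup (hbddG t) (mem_image_of_mem _ ⟨ht, mem_Ici.2 le_rfl⟩)
  -- integrability of products
  have prodInt : ∀ w ∈ Icc (0:ℝ) 1,
      Integrable (fun t => deriv (fun s => C₁ w s) t * g t)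
        (volume.restrict (Ioo (0:ℝ) 1)) := by
    intro w hw
    refine Integrable.mono' (integrable_const 1)
      ((measurable_deriv _).mul (measurable_deriv _)).aestronglyMeasurable ?_
    filter_upwards [ae_restrict_mem measurableSet_Ioo] with t ht
    have m1 := fw_mem w hw t ht
    have m2 := g_mem t ht
    rw [Real.norm_eq_abs, abs_mul, abs_of_nonneg m1.1, abs_of_nonneg m2.1]
    exact mul_le_one₀ m1.2 m2.1 m2.2
  -- representation of the Markov product as a set integral over Ioo
  have Mrepr : ∀ w, MarkovProduct C₁ C₂ w v
      = ∫ t in Ioo (0:ℝ) 1, deriv (fun s => C₁ w s) t * g t := by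
    intro w
    rw [MarkovProduct, intervalIntegral.integral_of_le zero_le_one]
    exact (setIntegral_congr_set Ioo_ae_eq_Ioc).symm
  rw [← sub_nonneg, Mrepr x, Mrepr y, Mrepr u]
  have hsplit : ∫ t in Ioo (0:ℝ) 1, k t * g t
      = (∫ t in Ioo (0:ℝ) 1, deriv (fun s => C₁ u s) t * g t)
      - (a * (∫ t in Ioo (0:ℝ) 1, deriv (fun s => C₁ x s) t * g t)
        + b * (∫ t in Ioo (0:ℝ) 1, deriv (fun s => C₁ y s) t * g t)) := by
    have e0 : ∫ t in Ioo (0:ℝ) 1, k t * g t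
        = ∫ t in Ioo (0:ℝ) 1, (deriv (fun s => C₁ u s) t * g t
          - (a * (deriv (fun s => C₁ x s) t * g t)
            + b * (deriv (fun s => C₁ y s) t * g t))) := by
      apply integral_congr_ae
      filter_upwards with t
      rw [hk]; ring
    have hint2 : Integrable (fun t => a * (deriv (fun s => C₁ x s) t * g t)
        + b * (deriv (fun s => C₁ y s) t * g t)) (volume.restrict (Ioo (0:ℝ) 1)) :=
      ((prodInt x hx).const_mul a).add ((prodInt y hy).const_mul b)
    rw [e0, integral_sub (prodInt u hu') hint2,
      integral_add ((prodInt x hx).const_mul a) ((prodInt y hy).const_mul b),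
      integral_const_mul, integral_const_mul]
  rw [← hsplit]
  have hfinal : ∫ t in Ioo (0:ℝ) 1, k t * g t = ∫ t in Ioo (0:ℝ) 1, k t * G t := by
    apply integral_congr_ae
    filter_upwards [hDae] with t ht
    rw [hGeq t ht]
  rw [hfinal]
  exact key_ineq k G hkmeas hkb hGanti hGmem H
end
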